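/- arXiv:1506.08280 — 2 statements merged into one kernel-verified Lean document; each statement's English description precedes it below -/
import Mathlib

section
/- (Persistence of surjectivity from large scale to small scale.) Suppose f : X → Y is a visual large scale Lipschitz function between proper δ-hyperbolic geodesic spaces. If f is coarsely surjective, then the induced map tilde f : ∂X → ∂Y between sequential boundaries is surjective. -/
open Filter Metric Set

noncomputable section

namespace Gromov

variable {X : Type*} [MetricSpace X] {Y : Type*} [MetricSpace Y]

/-- The Gromov product `(x,y)_a = (d(x,a)+d(y,a)-d(x,y))/2`. -/
def gp (a x y : X) : ℝ := (dist x a + dist y a - dist x y) / 2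

/-- Gromov `δ`-hyperbolicity via the `δ/4`-inequality. -/
def IsDeltaHyperbolic (X : Type*) [MetricSpace X] (δ : ℝ) : Prop :=
  ∀ x y z w : X, gp w x y ≥ min (gp w x z) (gp w z y) - δ / 4

/-- `γ` is a geodesic starting at `x`, parametrized by arclength on `[0, M]`. -/
def IsGeodesicOn (γ : ℝ → X) (x : X) (M : ℝ) : Prop :=
  γ 0 = x ∧ ∀ s ∈ Icc (0:ℝ) M, ∀ t ∈ Icc (0:ℝ) M, dist (γ s) (γ t) = |s - t|

/-- Every two points are joined by a geodesic. -/
def IsGeodesicSpace (X : Type*) [MetricSpace X] : Prop :=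
  ∀ x y : X, ∃ γ : ℝ → X, IsGeodesicOn γ x (dist x y) ∧ γ (dist x y) = y

/-- An infinite geodesic ray emanating from `x`. -/
def IsRay (γ : ℝ → X) (x : X) : Prop :=
  γ 0 = x ∧ ∀ s ∈ Ici (0:ℝ), ∀ t ∈ Ici (0:ℝ), dist (γ s) (γ t) = |s - t|

/-- `f` is `(l, μ)`-large scale Lipschitz. -/
def IsLSL (f : X → Y) (l μ : ℝ) : Prop :=
  ∀ x y : X, dist (f x) (f y) ≤ l * dist x y + μ

/-- `f` is large scale Lipschitz. -/
def LSL (f : X → Y) : Prop := ∃ l μ : ℝ, 0 < l ∧ 0 < μ ∧ IsLSL f l μ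

/-- The `(l2, μ2)`-radial lower bound condition with respect to `x₀`:
on every finite geodesic emanating from `x₀`, `l2·d(x,y) - μ2 ≤ d(f(x),f(y))`. -/
def IsRadialWith (f : X → Y) (x₀ : X) (l2 μ2 : ℝ) : Prop :=
  ∀ M, 0 ≤ M → ∀ γ : ℝ → X, IsGeodesicOn γ x₀ M →
    ∀ s ∈ Icc (0:ℝ) M, ∀ t ∈ Icc (0:ℝ) M,
      l2 * dist (γ s) (γ t) - μ2 ≤ dist (f (γ s)) (f (γ t))

/-- `f` is a radial function with respect to `x₀`. -/
def Radial (f : X → Y) (x₀ : X) : Prop :=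
  LSL f ∧ ∃ l2 μ2 : ℝ, 0 < l2 ∧ 0 < μ2 ∧ IsRadialWith f x₀ l2 μ2

/-- `f` is visual: for some basepoint `a`, `(x_n,y_n)_a → ∞` implies
`(f(x_n),f(y_n))_{f(a)} → ∞`. -/
def VisualFn (f : X → Y) : Prop :=
  ∃ a : X, ∀ x y : ℕ → X,
    Tendsto (fun n => gp a (x n) (y n)) atTop atTop →
    Tendsto (fun n => gp (f a) (f (x n)) (f (y n))) atTop atTop

/-- `liminf_{i,j→∞} (x_i,x_j)_a = ∞`: the sequence converges to infinity. -/
def ConvSeq (a : X) (x : ℕ → X) : Prop :=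
  Tendsto (fun p : ℕ × ℕ => gp a (x p.1) (x p.2)) atTop atTop

/-- `liminf_{i,j→∞} (x_i,y_j)_a = ∞`: the two sequences are equivalent. -/
def SeqEquiv (a : X) (x y : ℕ → X) : Prop :=
  Tendsto (fun p : ℕ × ℕ => gp a (x p.1) (y p.2)) atTop atTop

def BSeq (a : X) : Type _ := {x : ℕ → X // ConvSeq a x}

/-- The sequential boundary `∂X` with basepoint `a`. -/
def Boundary (a : X) : Type _ := Quot (fun x y : BSeq a => SeqEquiv a x.1 y.1)

/-- The boundary point represented by a sequence. -/
def bpt (a : X) (x : ℕ → X) (hx : ConvSeq a x) : Boundary a :=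
  Quot.mk _ ⟨x, hx⟩

/-- `liminf_{i,j→∞} (x_i,y_j)_a` as an extended real. -/
def gpSeqs (a : X) (x y : ℕ → X) : EReal :=
  liminf (fun p : ℕ × ℕ => ((gp a (x p.1) (y p.2)) : EReal)) atTop

/-- The basic neighborhood `U(p,r)` in the sequential boundary. -/
def U (a : X) (p : Boundary a) (r : ℝ) : Set (Boundary a) :=
  {q | ∃ (x y : ℕ → X) (hx : ConvSeq a x) (hy : ConvSeq a y),
    bpt a x hx = p ∧ bpt a y hy = q ∧ (r : EReal) ≤ gpSeqs a x y}

instance (a : X) : TopologicalSpace (Boundary a) :=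
  TopologicalSpace.generateFrom {s | ∃ p r, 0 < r ∧ s = U a p r}

/-- The union `X ∪ ∂X`. -/
def Comp (a : X) : Type _ := X ⊕ Boundary a

def Comp.inl {a : X} (x : X) : Comp a := Sum.inl x
def Comp.inr {a : X} (p : Boundary a) : Comp a := Sum.inr p

/-- The extension of `U(p,r)` to `X ∪ ∂X`. -/
def UFull (a : X) (p : Boundary a) (r : ℝ) : Set (Comp a) :=
  {z : X ⊕ Boundary a | Sum.elim
    (fun x : X => ∃ (s : ℕ → X) (hs : ConvSeq a s), bpt a s hs = p ∧
      (r : EReal) ≤ liminf (fun i : ℕ => ((gp a (s i) x) : EReal)) atTop)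
    (fun q : Boundary a => q ∈ U a p r) z}

instance (a : X) : TopologicalSpace (Comp a) :=
  TopologicalSpace.generateFrom
    ({s | ∃ u : Set X, IsOpen u ∧ s = Comp.inl '' u} ∪
     {s | ∃ p r, 0 < r ∧ s = UFull a p r})

/-- The Gromov product of two boundary points:
`(p,q)_a = inf liminf_{i→∞} (x_i,y_i)_a` over representatives. -/
def gpBoundary (a : X) (p q : Boundary a) : EReal :=
  sInf {e : EReal | ∃ (x y : ℕ → X) (hx : ConvSeq a x) (hy : ConvSeq a y),
    bpt a x hx = p ∧ bpt a y hy = q ∧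
    e = liminf (fun i : ℕ => ((gp a (x i) (y i)) : EReal)) atTop}

/-- `K^{-e}` for an extended real exponent `e` (with `K^{-∞} = 0`). -/
def negPow (K : ℝ) (e : EReal) : ℝ :=
  if e = ⊤ then 0 else if e = ⊥ then 0 else Real.rpow K (-(e.toReal))

/-- `d` is a visual metric on `∂X` with parameters `K, C > 1`. -/
def IsVisualMetric (a : X) (d : Boundary a → Boundary a → ℝ) (K C : ℝ) : Prop :=
  1 < K ∧ 1 < C ∧ ∀ p q : Boundary a,
    negPow K (gpBoundary a p q) / C ≤ d p q ∧ d p q ≤ C * negPow K (gpBoundary a p q)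

/-- A map between sets with distinguished distance functions is Hölder. -/
def IsHolder {A B : Type*} (dA : A → A → ℝ) (dB : B → B → ℝ) (g : A → B) : Prop :=
  ∃ L α : ℝ, 0 < L ∧ 0 < α ∧ ∀ p q : A, dB (g p) (g q) ≤ L * Real.rpow (dA p q) α

/-- `(ξ₁,ξ₂)_a = liminf_{t→∞} (ξ₁(t),ξ₂(t))_a` for rays. -/
def gpRays (a : X) (ξ₁ ξ₂ : ℝ → X) : EReal :=
  liminf (fun t : ℝ => ((gp a (ξ₁ t) (ξ₂ t)) : EReal)) atTop

/-- The geodesic ray `ξ` represents the boundary point `p`. -/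
def RayRepresents (a : X) (ξ : ℝ → X) (p : Boundary a) : Prop :=
  ∃ h : ConvSeq a (fun n : ℕ => ξ n), bpt a (fun n : ℕ => ξ n) h = p

/-- `(x,ξ)_a = liminf_{n→∞} (x,ξ(n))_a`. -/
def gpPointRay (a x : X) (ξ : ℝ → X) : ℝ :=
  liminf (fun n : ℕ => gp a x (ξ n)) atTop

/-- `X` is a visual hyperbolic space with basepoint `a` and constant `D`. -/
def IsVisualSpace (a : X) (D : ℝ) : Prop :=
  ∀ x : X, ∃ ξ : ℝ → X, IsRay ξ a ∧ gpPointRay a x ξ > dist x a - D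

/-- A maximal finite geodesic from `a`: it admits no proper geodesic extension. -/
def MaximalGeodesic (ζ : ℝ → X) (a : X) (M : ℝ) : Prop :=
  IsGeodesicOn ζ a M ∧
    ¬ ∃ (M' : ℝ) (ζ' : ℝ → X), M < M' ∧ IsGeodesicOn ζ' a M' ∧
      ∀ t ∈ Icc (0:ℝ) M, ζ' t = ζ t

/-- `f : X → Y` is a radial extension with parameter `A` of `g : ∂X → ∂Y`
(`D` being the visuality constant of `X`). -/
def IsRadialExtension (a : X) (b : Y) (g : Boundary a → Boundary b)
    (A D : ℝ) (f : X → Y) : Prop :=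
  f a = b ∧
  ∀ x : X, x ≠ a →
    ((∃ (ξ : ℝ → X) (t : ℝ), IsRay ξ a ∧ 0 ≤ t ∧ ξ t = x) →
      ∃ (ξ : ℝ → X) (t : ℝ) (η : ℝ → Y), IsRay ξ a ∧ 0 ≤ t ∧ ξ t = x ∧ IsRay η b ∧
        (∃ p : Boundary a, RayRepresents a ξ p ∧ RayRepresents b η (g p)) ∧
        f x = η (A * t)) ∧
    ((¬ ∃ (ξ : ℝ → X) (t : ℝ), IsRay ξ a ∧ 0 ≤ t ∧ ξ t = x) →
      ∃ (M t : ℝ) (ζ ξ : ℝ → X) (η : ℝ → Y),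
        MaximalGeodesic ζ a M ∧ t ∈ Icc (0:ℝ) M ∧ ζ t = x ∧
        IsRay ξ a ∧ gpPointRay a (ζ M) ξ > dist (ζ M) a - D ∧ IsRay η b ∧
        (∃ p : Boundary a, RayRepresents a ξ p ∧ RayRepresents b η (g p)) ∧
        f x = η (A * t))

/-- `f` is coarsely surjective. -/
def CoarselySurjective (f : X → Y) : Prop :=
  ∃ S : ℝ, 0 < S ∧ ∀ y : Y, ∃ x : X, dist y (f x) ≤ S

/-- `f` is bornologous (coarse). -/
def Bornologous (f : X → Y) : Prop :=
  ∀ R : ℝ, 0 < R → ∃ S : ℝ, 0 < S ∧ ∀ x x' : X, dist x x' ≤ R → dist (f x) (f x') ≤ S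

/-- `f` is a coarse embedding. -/
def CoarseEmbedding (f : X → Y) : Prop :=
  Bornologous f ∧
    ∀ R : ℝ, 0 < R → ∃ S : ℝ, 0 < S ∧ ∀ x x' : X, dist (f x) (f x') ≤ R → dist x x' ≤ S

/-- `f` is coarsely `n`-to-1. -/
def CoarselyNto1 (f : X → Y) (n : ℕ) : Prop :=
  ∀ R : ℝ, 0 < R → ∃ S : ℝ, 0 < S ∧ ∀ A : Set Y, EMetric.diam A < ENNReal.ofReal R →
    ∃ B : Fin n → Set X, (f ⁻¹' A = ⋃ i, B i) ∧
      ∀ i, EMetric.diam (B i) < ENNReal.ofReal S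

/-- `g : ∂X → ∂Y` is the boundary map induced by `f`, i.e. `g [(x_n)] = [(f(x_n))]`. -/
def InducedBoundaryMap (a : X) (f : X → Y) (g : Boundary a → Boundary (f a)) : Prop :=
  ∀ (x : ℕ → X) (hx : ConvSeq a x) (hfx : ConvSeq (f a) (f ∘ x)),
    g (bpt a x hx) = bpt (f a) (f ∘ x) hfx

/-- `g` is (at most) `n`-to-1. -/
def NTo1 {A B : Type*} (g : A → B) (n : ℕ) : Prop :=
  ∀ b : B, ∃ s : Finset A, s.card ≤ n ∧ ∀ a : A, g a = b → a ∈ s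

/-- Covering dimension at most `n`: every open cover admits an open refinement
of multiplicity at most `n+1`. -/
def CovDimLE (Z : Type*) [TopologicalSpace Z] (n : ℕ) : Prop :=
  ∀ 𝒰 : Set (Set Z), (∀ u ∈ 𝒰, IsOpen u) → ⋃₀ 𝒰 = univ →
    ∃ 𝒱 : Set (Set Z), (∀ v ∈ 𝒱, IsOpen v) ∧ ⋃₀ 𝒱 = univ ∧
      (∀ v ∈ 𝒱, ∃ u ∈ 𝒰, v ⊆ u) ∧
      ∀ z : Z, {v ∈ 𝒱 | z ∈ v}.Finite ∧ {v ∈ 𝒱 | z ∈ v}.ncard ≤ n + 1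

/-- `c_{f,n}(r)`: the supremum of numbers `B` such that there exist `n+1` points
with mutual Gromov products `< r` whose images have mutual Gromov products `≥ B`. -/
def cfn (a : X) (b : Y) (f : X → Y) (n : ℕ) (r : ℝ) : EReal :=
  sSup {e : EReal | ∃ (B : ℝ) (x : Fin (n + 1) → X), e = (B : EReal) ∧
    (∀ i j, i ≠ j → gp a (x i) (x j) < r) ∧
    (∀ i j, i ≠ j → B ≤ gp b (f (x i)) (f (x j)))}

lemma gp_self_eq (a x : X) : gp a x x = dist x a := by simp [gp]

lemma gp_comm_eq (a x y : X) : gp a x y = gp a y x := by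
  simp only [gp, dist_comm x y]; ring

lemma gp_lip_left (a x x' y : X) : gp a x' y - dist x x' ≤ gp a x y := by
  have h1 := abs_le.mp (abs_dist_sub_le x' x a)
  have h2 := abs_le.mp (abs_dist_sub_le x x' y)
  simp only [gp]; rw [dist_comm x x'] at h2 ⊢; linarith [h1.2, h2.2]

lemma gp_lip_right (a x y y' : X) : gp a x y' - dist y y' ≤ gp a x y := by
  rw [gp_comm_eq a x y, gp_comm_eq a x y']
  exact gp_lip_left a y y' x

lemma gp_base_change (a a' x y : X) : gp a' x y - dist a a' ≤ gp a x y := by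
  have h1 := abs_le.mp (abs_dist_sub_le a' a x)
  have h2 := abs_le.mp (abs_dist_sub_le a' a y)
  simp only [gp]
  rw [dist_comm x a, dist_comm y a, dist_comm x a', dist_comm y a', dist_comm a a']
  linarith [h1.2, h2.2]

lemma gp_geodesic {a x : X} {γ : ℝ → X} {M : ℝ} (hγ : IsGeodesicOn γ a M)
    (hend : γ M = x) {t : ℝ} (ht : t ∈ Icc (0:ℝ) M) :
    gp a (γ t) x = t ∧ dist a (γ t) = t := by
  obtain ⟨h0, hd⟩ := hγ
  have hM : (0:ℝ) ≤ M := le_trans ht.1 ht.2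
  have h0m : (0:ℝ) ∈ Icc (0:ℝ) M := ⟨le_refl _, hM⟩
  have hMm : M ∈ Icc (0:ℝ) M := ⟨hM, le_refl _⟩
  have e1 : dist (γ t) a = t := by
    rw [← h0, hd t ht 0 h0m, sub_zero, abs_of_nonneg ht.1]
  have e2 : dist x a = M := by
    rw [← h0, ← hend, hd M hMm 0 h0m, sub_zero, abs_of_nonneg hM]
  have e3 : dist (γ t) x = M - t := by
    rw [← hend, hd t ht M hMm, abs_of_nonpos (by linarith [ht.2]), neg_sub]
  constructor
  · simp only [gp, e1, e2, e3]; ring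
  · rw [dist_comm]; exact e1

lemma visual_any {f : X → Y} (hvis : VisualFn f) (a : X) :
    ∀ x y : ℕ → X, Tendsto (fun n => gp a (x n) (y n)) atTop atTop →
    Tendsto (fun n => gp (f a) (f (x n)) (f (y n))) atTop atTop := by
  obtain ⟨a', ha'⟩ := hvis
  intro x y hxy
  have h1 : Tendsto (fun n => gp a' (x n) (y n)) atTop atTop := by
    apply tendsto_atTop_mono (fun n => gp_base_change a' a (x n) (y n))
    exact tendsto_atTop_add_const_right _ _ hxy
  have h2 := ha' x y h1
  apply tendsto_atTop_mono (fun n => gp_base_change (f a) (f a') (f (x n)) (f (y n)))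
  exact tendsto_atTop_add_const_right _ _ h2

lemma tendsto_pair_diag {α : Type*} [SemilatticeSup α] [Nonempty α] :
    Tendsto (fun n : α => (n, n)) atTop (atTop : Filter (α × α)) := by
  rw [← prod_atTop_atTop_eq]
  exact tendsto_id.prodMk tendsto_id

lemma convseq_image {f : X → Y} (hvis : VisualFn f) (a : X) (x : ℕ → X)
    (hx : ConvSeq a x) : ConvSeq (f a) (f ∘ x) := by
  by_contra hc
  rw [ConvSeq, Filter.tendsto_atTop] at hc
  push_neg at hc
  obtain ⟨C, hC⟩ := hc
  rw [frequently_atTop] at hC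
  have hsel : ∀ k : ℕ, ∃ p : ℕ × ℕ, (k, k) ≤ p ∧
      gp (f a) ((f ∘ x) p.1) ((f ∘ x) p.2) < C := by
    intro k; obtain ⟨p, hp1, hp2⟩ := hC (k, k); exact ⟨p, hp1, by exact hp2⟩
  choose p hp1 hp2 using hsel
  have hptop : Tendsto p atTop atTop := tendsto_atTop_mono hp1 tendsto_pair_diag
  have hgp : Tendsto (fun k => gp a (x (p k).1) (x (p k).2)) atTop atTop := hx.comp hptop
  have := visual_any hvis a (fun k => x (p k).1) (fun k => x (p k).2) hgp
  rw [Filter.tendsto_atTop] at this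
  obtain ⟨k, hk⟩ := (this C).exists
  exact absurd hk (not_le.mpr (hp2 k))

lemma exists_subseq_convseq {δ : ℝ} (hX : IsDeltaHyperbolic X δ) (hgX : IsGeodesicSpace X)
    [ProperSpace X] (a : X) (x : ℕ → X)
    (hd : Tendsto (fun n => dist a (x n)) atTop atTop) :
    ∃ φ : ℕ → ℕ, StrictMono φ ∧ ConvSeq a (x ∘ φ) := by
  choose γ hγ hγend using fun n => hgX a (x n)
  set U : Ultrafilter ℕ := Ultrafilter.of atTop with hU
  have hUle : (U : Filter ℕ) ≤ atTop := Ultrafilter.of_le atTop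
  have hD : ∀ m : ℕ, {n : ℕ | (m:ℝ) ≤ dist a (x n)} ∈ U := fun m =>
    hUle (hd.eventually_ge_atTop (m:ℝ))
  have hgeo : ∀ (m : ℕ) (n : ℕ), (m:ℝ) ≤ dist a (x n) →
      gp a (γ n (m:ℝ)) (x n) = m ∧ dist a (γ n (m:ℝ)) = m := by
    intro m n hn
    exact gp_geodesic (hγ n) (hγend n) ⟨Nat.cast_nonneg m, hn⟩
  have key : ∀ m : ℕ, ∃ Am : Set ℕ, Am ∈ U ∧
      ∀ n1 ∈ Am, ∀ n2 ∈ Am, dist (γ n1 (m:ℝ)) (γ n2 (m:ℝ)) ≤ 1 := by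
    intro m
    have hball : {n : ℕ | γ n (m:ℝ) ∈ closedBall a (m:ℝ)} ∈ U := by
      refine Filter.mem_of_superset (hD m) ?_
      intro n hn
      simp only [Set.mem_setOf_eq, Metric.mem_closedBall]
      rw [dist_comm]
      exact le_of_eq (hgeo m n hn).2
    have hcomp := isCompact_closedBall a (m:ℝ)
    have hmap : closedBall a (m:ℝ) ∈ U.map (fun n => γ n (m:ℝ)) := by
      rwa [Ultrafilter.mem_map]
    obtain ⟨z, _, hz2⟩ := hcomp.ultrafilter_le_nhds (U.map _) (le_principal_iff.mpr hmap)
    have hb : (fun n => γ n (m:ℝ)) ⁻¹' (Metric.ball z (1/2)) ∈ U := by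
      have h := hz2 (Metric.ball_mem_nhds z (by norm_num : (0:ℝ) < 1/2))
      rwa [Ultrafilter.mem_coe, Ultrafilter.mem_map] at h
    refine ⟨_, hb, ?_⟩
    intro n1 h1 n2 h2
    simp only [Set.mem_preimage, Metric.mem_ball] at h1 h2
    calc dist (γ n1 (m:ℝ)) (γ n2 (m:ℝ)) ≤ dist (γ n1 (m:ℝ)) z + dist z (γ n2 (m:ℝ)) :=
          dist_triangle _ _ _
      _ ≤ 1 := by rw [dist_comm z] ; linarith
  choose A hAU hA using key
  set s : ℕ → Set ℕ := fun k =>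
    ⋂ m ∈ Finset.range (k+1), (A m ∩ {n : ℕ | (m:ℝ) ≤ dist a (x n)}) with hs
  have hsU : ∀ k, s k ∈ U := by
    intro k
    show (⋂ m ∈ Finset.range (k+1), (A m ∩ {n : ℕ | (m:ℝ) ≤ dist a (x n)})) ∈ U
    exact (Filter.biInter_finset_mem _).mpr (fun m _ => Filter.inter_mem (hAU m) (hD m))
  have hs_sub : ∀ m k, m ≤ k → s k ⊆ A m ∩ {n : ℕ | (m:ℝ) ≤ dist a (x n)} := by
    intro m k hmk
    exact Set.biInter_subset_of_mem (Finset.mem_range.mpr (Nat.lt_succ_of_le hmk))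
  have pickable : ∀ k N : ℕ, ∃ j, j ∈ s k ∧ N < j := by
    intro k N
    have hmem : s k ∩ Set.Ioi N ∈ U := Filter.inter_mem (hsU k) (hUle (Ioi_mem_atTop N))
    obtain ⟨j, hj⟩ := Ultrafilter.nonempty_of_mem hmem
    exact ⟨j, hj.1, hj.2⟩
  choose pick hpick1 hpick2 using pickable
  let φ : ℕ → ℕ := fun k => Nat.rec (pick 0 0) (fun k ih => pick (k+1) ih) k
  have hφs : ∀ k, φ k ∈ s k := by
    intro k
    cases k with
    | zero => exact hpick1 0 0
    | succ k => exact hpick1 (k+1) _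
  have hφmono : StrictMono φ := strictMono_nat_of_lt_succ (fun k => hpick2 (k+1) (φ k))
  refine ⟨φ, hφmono, ?_⟩
  have main : ∀ m k l : ℕ, m ≤ k → m ≤ l →
      (m:ℝ) - 1 - δ/4 ≤ gp a (x (φ k)) (x (φ l)) := by
    intro m k l hk hl
    obtain ⟨hA1, hD1⟩ := hs_sub m k hk (hφs k)
    obtain ⟨hA2, hD2⟩ := hs_sub m l hl (hφs l)
    set n1 := φ k
    set n2 := φ l
    have e1 := hgeo m n1 hD1
    have e2 := hgeo m n2 hD2
    have hdz : dist (γ n1 (m:ℝ)) (γ n2 (m:ℝ)) ≤ 1 := hA m n1 hA1 n2 hA2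
    have b1 : gp a (x n1) (γ n1 (m:ℝ)) = m := by rw [gp_comm_eq]; exact e1.1
    have b2 : (m:ℝ) - 1 ≤ gp a (γ n1 (m:ℝ)) (x n2) := by
      have h := gp_lip_left a (γ n1 (m:ℝ)) (γ n2 (m:ℝ)) (x n2)
      rw [e2.1] at h
      linarith
    have hhyp := hX (x n1) (x n2) (γ n1 (m:ℝ)) a
    have hmin : (m:ℝ) - 1 ≤ min (gp a (x n1) (γ n1 (m:ℝ))) (gp a (γ n1 (m:ℝ)) (x n2)) :=
      le_min (by rw [b1]; linarith) b2
    linarith [hhyp, hmin]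
  rw [ConvSeq, Filter.tendsto_atTop]
  intro b
  obtain ⟨m, hm⟩ := exists_nat_ge (b + 1 + δ/4)
  rw [eventually_atTop]
  refine ⟨(m, m), fun p hp => ?_⟩
  have h := main m p.1 p.2 hp.1 hp.2
  simp only [Function.comp] at h ⊢
  linarith

set_option maxHeartbeats 2000000 in
/-- persistence of surjectivity: if a visual large scale Lipschitz
function between proper δ-hyperbolic geodesic spaces is coarsely surjective,
then the induced map of sequential boundaries is surjective. -/
theorem stmt12 {X : Type*} [MetricSpace X] [ProperSpace X]
    {Y : Type*} [MetricSpace Y] [ProperSpace Y]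
    (δ : ℝ) (hX : IsDeltaHyperbolic X δ) (hY : IsDeltaHyperbolic Y δ)
    (hgX : IsGeodesicSpace X) (hgY : IsGeodesicSpace Y)
    (f : X → Y) (hf : LSL f) (hvis : VisualFn f) (a : X)
    (hsurj : CoarselySurjective f) :
    ∀ g : Boundary a → Boundary (f a), InducedBoundaryMap a f g →
      Function.Surjective g := by
  intro g hg q
  obtain ⟨⟨y, hy⟩, rfl⟩ := Quot.exists_rep q
  obtain ⟨l, μ, hl, hμ, hlsl⟩ := hf
  obtain ⟨S, hS, hSx⟩ := hsurj
  choose xs hxs using fun n => hSx (y n)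
  -- dist (y n) (f a) → ∞
  have h1 : Tendsto (fun n => dist (y n) (f a)) atTop atTop := by
    have h := hy.comp (tendsto_pair_diag (α := ℕ))
    exact Tendsto.congr (fun n => gp_self_eq (f a) (y n)) h
  -- dist a (xs n) → ∞
  have h2 : Tendsto (fun n => dist a (xs n)) atTop atTop := by
    have hbound : ∀ n, (dist (y n) (f a) - S - μ) / l ≤ dist a (xs n) := by
      intro n
      have ht : dist (y n) (f a) ≤ dist (y n) (f (xs n)) + dist (f (xs n)) (f a) :=
        dist_triangle _ _ _
      have hL : dist (f (xs n)) (f a) ≤ l * dist (xs n) a + μ := hlsl (xs n) a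
      rw [dist_comm a (xs n)]
      rw [div_le_iff₀ hl]
      nlinarith [hxs n, dist_nonneg (x := xs n) (y := a)]
    apply tendsto_atTop_mono hbound
    apply Tendsto.atTop_div_const hl
    apply tendsto_atTop_add_const_right
    apply tendsto_atTop_add_const_right
    exact h1
  obtain ⟨φ, hφmono, hφconv⟩ := exists_subseq_convseq (δ := δ) hX hgX a xs h2
  have hφtop : Tendsto φ atTop atTop := hφmono.tendsto_atTop
  have himg : ConvSeq (f a) (f ∘ (xs ∘ φ)) := convseq_image hvis a (xs ∘ φ) hφconv
  refine ⟨bpt a (xs ∘ φ) hφconv, ?_⟩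
  rw [hg (xs ∘ φ) hφconv himg]
  apply Quot.sound
  show SeqEquiv (f a) (f ∘ (xs ∘ φ)) y
  -- gp (f a) (f (xs (φ i))) (y j) ≥ gp (f a) (y (φ i)) (y j) - S
  have hlow : ∀ p : ℕ × ℕ, gp (f a) (y (φ p.1)) (y p.2) - S ≤
      gp (f a) ((f ∘ (xs ∘ φ)) p.1) (y p.2) := by
    intro p
    have h := gp_lip_left (f a) (f (xs (φ p.1))) (y (φ p.1)) (y p.2)
    have hd : dist (f (xs (φ p.1))) (y (φ p.1)) ≤ S := by
      rw [dist_comm]; exact hxs (φ p.1)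
    simp only [Function.comp]
    linarith
  apply tendsto_atTop_mono hlow
  apply tendsto_atTop_add_const_right
  have hfst : Tendsto (fun p : ℕ × ℕ => p.1) (atTop : Filter (ℕ × ℕ)) atTop := by
    rw [← prod_atTop_atTop_eq]; exact tendsto_fst
  have hsnd : Tendsto (fun p : ℕ × ℕ => p.2) (atTop : Filter (ℕ × ℕ)) atTop := by
    rw [← prod_atTop_atTop_eq]; exact tendsto_snd
  have hmap : Tendsto (fun p : ℕ × ℕ => ((φ p.1, p.2) : ℕ × ℕ)) atTop atTop :=
    Tendsto.mono_right (Tendsto.prodMk (hφtop.comp hfst) hsnd) prod_atTop_atTop_eq.le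
  exact hy.comp hmap

end Gromov
end
end

section
/- Suppose f : X → Y is a radial function between proper δ-hyperbolic geodesic spaces. If the induced map tilde f : ∂X → ∂Y between sequential boundaries is surjective and Y is visual, then f is coarsely surjective. -/
open Filter Metric Set

noncomputable section

namespace Gromov

variable {X : Type*} [MetricSpace X] {Y : Type*} [MetricSpace Y]

section Helpers

variable {Z : Type*} [MetricSpace Z]

lemma gp_comm (a x y : Z) : gp a x y = gp a y x := by
  unfold gp; rw [dist_comm x y]; ring

lemma gp_nonneg (a x y : Z) : 0 ≤ gp a x y := by
  unfold gp
  have h := dist_triangle x a y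
  have : dist a y = dist y a := dist_comm a y
  linarith

lemma gp_le_left (a x y : Z) : gp a x y ≤ dist x a := by
  unfold gp
  have h := dist_triangle y x a
  have : dist y x = dist x y := dist_comm y x
  linarith

lemma gp_le_right (a x y : Z) : gp a x y ≤ dist y a := by
  rw [gp_comm]; exact gp_le_left a y x

lemma gp_lip (a x y z : Z) : gp a x y ≤ gp a x z + dist y z := by
  unfold gp
  have h1 : dist y a ≤ dist y z + dist z a := dist_triangle y z a
  have h2 : dist x z ≤ dist x y + dist y z := dist_triangle x y z
  linarith

lemma gp_base_swap (a x y : Z) : gp a x y = dist x a - gp x a y := by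
  unfold gp
  rw [dist_comm a x, dist_comm y x, dist_comm y a]; ring

lemma hyp_nonneg {δ : ℝ} (hZ : IsDeltaHyperbolic Z δ) (z : Z) : 0 ≤ δ := by
  have h := hZ z z z z
  rw [min_self] at h
  linarith

lemma IsGeodesicOn.dist_from_start {γ : ℝ → Z} {c : Z} {M s : ℝ}
    (h : IsGeodesicOn γ c M) (hs : s ∈ Icc (0:ℝ) M) : dist (γ s) c = s := by
  obtain ⟨h0, hd⟩ := h
  have h0m : (0:ℝ) ∈ Icc (0:ℝ) M := ⟨le_rfl, hs.1.trans hs.2⟩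
  rw [← h0, hd s hs 0 h0m, sub_zero, abs_of_nonneg hs.1]

lemma IsGeodesicOn.dist_to_end {γ : ℝ → Z} {c : Z} {M s : ℝ}
    (h : IsGeodesicOn γ c M) (hs : s ∈ Icc (0:ℝ) M) : dist (γ s) (γ M) = M - s := by
  have hMm : M ∈ Icc (0:ℝ) M := ⟨hs.1.trans hs.2, le_rfl⟩
  rw [h.2 s hs M hMm, abs_of_nonpos (by linarith [hs.2]), neg_sub]

lemma gp_geod {γ : ℝ → Z} {c x : Z} {s : ℝ}
    (h : IsGeodesicOn γ c (dist c x)) (he : γ (dist c x) = x)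
    (hs : s ∈ Icc (0:ℝ) (dist c x)) : gp c (γ s) x = s := by
  have d1 : dist (γ s) c = s := h.dist_from_start hs
  have d2 : dist x c = dist c x := dist_comm x c
  have d3 : dist (γ s) x = dist c x - s := by
    have hd := h.dist_to_end hs
    rwa [he] at hd
  unfold gp
  rw [d1, d2, d3]; ring

/-- Fellow traveling of two geodesics from a common basepoint. -/
lemma fellow {δ : ℝ} (hZ : IsDeltaHyperbolic Z δ) (hδ : 0 ≤ δ) {c x z : Z}
    {γ σ : ℝ → Z}
    (hγ : IsGeodesicOn γ c (dist c x)) (hγx : γ (dist c x) = x)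
    (hσ : IsGeodesicOn σ c (dist c z)) (hσz : σ (dist c z) = z)
    {t : ℝ} (ht0 : 0 ≤ t) (ht : t ≤ gp c x z) :
    dist (γ t) (σ t) ≤ δ := by
  have htx : t ∈ Icc (0:ℝ) (dist c x) := by
    refine ⟨ht0, ht.trans ?_⟩
    rw [← dist_comm x c]; exact gp_le_left c x z
  have htz : t ∈ Icc (0:ℝ) (dist c z) := by
    refine ⟨ht0, ht.trans ?_⟩
    rw [← dist_comm z c]; exact gp_le_right c x z
  have e1 : gp c (γ t) x = t := gp_geod hγ hγx htx
  have e2 : gp c z (σ t) = t := by rw [gp_comm]; exact gp_geod hσ hσz htz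
  have h1 := hZ (γ t) (σ t) x c
  have h2 := hZ x (σ t) z c
  rw [e2] at h2
  rw [e1] at h1
  have hm2 : min (gp c x z) t = t := min_eq_right ht
  have h2' : t - δ/4 ≤ gp c x (σ t) := by rw [hm2] at h2; linarith
  have hm1 : t - δ/2 ≤ gp c (γ t) (σ t) := by
    have : t - δ/4 ≤ min t (gp c x (σ t)) := le_min (by linarith) h2'
    linarith [h1]
  have d1 : dist (γ t) c = t := hγ.dist_from_start htx
  have d2 : dist (σ t) c = t := hσ.dist_from_start htz
  have hdef : gp c (γ t) (σ t) = (dist (γ t) c + dist (σ t) c - dist (γ t) (σ t))/2 := rfl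
  rw [d1, d2] at hdef
  linarith

/-- Thin triangles: a point on one side is δ-close to the union of the other two. -/
lemma thin {δ : ℝ} (hZ : IsDeltaHyperbolic Z δ) (hδ : 0 ≤ δ) {u v z : Z}
    {σ α β : ℝ → Z}
    (hσ : IsGeodesicOn σ u (dist u v)) (hσv : σ (dist u v) = v)
    (hα : IsGeodesicOn α u (dist u z)) (hαz : α (dist u z) = z)
    (hβ : IsGeodesicOn β z (dist z v)) (hβv : β (dist z v) = v)
    {r : ℝ} (hr : r ∈ Icc (0:ℝ) (dist u v)) :
    (∃ t ∈ Icc (0:ℝ) (dist u z), dist (σ r) (α t) ≤ δ) ∨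
      (∃ t ∈ Icc (0:ℝ) (dist z v), dist (σ r) (β t) ≤ δ) := by
  rcases le_or_gt r (gp u v z) with hcase | hcase
  · left
    refine ⟨r, ⟨hr.1, hcase.trans ?_⟩, fellow hZ hδ hσ hσv hα hαz hr.1 hcase⟩
    rw [← dist_comm z u]; exact gp_le_right u v z
  · right
    set L := dist u v with hL
    have hLvu : dist v u = L := dist_comm v u
    -- reversed geodesics from v
    set σ' : ℝ → Z := fun t => σ (L - t) with hσ'def
    have hσ'geo : IsGeodesicOn σ' v (dist v u) := by
      constructor
      · show σ (L - 0) = v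
        rw [sub_zero]; exact hσv
      · intro s hs t ht
        rw [hLvu] at hs ht
        have hsm : L - s ∈ Icc (0:ℝ) L := ⟨by linarith [hs.2], by linarith [hs.1]⟩
        have htm : L - t ∈ Icc (0:ℝ) L := ⟨by linarith [ht.2], by linarith [ht.1]⟩
        show dist (σ (L - s)) (σ (L - t)) = |s - t|
        rw [hσ.2 (L - s) hsm (L - t) htm]
        rw [show L - s - (L - t) = -(s - t) by ring, abs_neg]
    have hσ'end : σ' (dist v u) = u := by
      show σ (L - dist v u) = u
      rw [hLvu, sub_self]; exact hσ.1
    set β' : ℝ → Z := fun t => β (dist z v - t) with hβ'def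
    have hβ'geo : IsGeodesicOn β' v (dist v z) := by
      constructor
      · show β (dist z v - 0) = v
        rw [sub_zero]; exact hβv
      · intro s hs t ht
        rw [dist_comm v z] at hs ht
        have hsm : dist z v - s ∈ Icc (0:ℝ) (dist z v) := ⟨by linarith [hs.2], by linarith [hs.1]⟩
        have htm : dist z v - t ∈ Icc (0:ℝ) (dist z v) := ⟨by linarith [ht.2], by linarith [ht.1]⟩
        show dist (β (dist z v - s)) (β (dist z v - t)) = |s - t|
        rw [hβ.2 _ hsm _ htm, show dist z v - s - (dist z v - t) = -(s - t) by ring, abs_neg]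
    have hβ'end : β' (dist v z) = z := by
      show β (dist z v - dist v z) = z
      rw [dist_comm v z, sub_self]; exact hβ.1
    set r' := L - r with hr'def
    have hswap : gp u v z = dist v u - gp v u z := gp_base_swap u v z
    have hr'le : r' ≤ gp v u z := by
      rw [hr'def]
      have : gp u v z = L - gp v u z := by rw [hswap, hLvu]
      linarith
    have hr'0 : 0 ≤ r' := by rw [hr'def]; linarith [hr.2]
    have hfel := fellow hZ hδ hσ'geo hσ'end hβ'geo hβ'end hr'0 hr'le
    have hσ'r : σ' r' = σ r := by
      show σ (L - (L - r)) = σ r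
      congr 1; ring
    rw [hσ'r] at hfel
    refine ⟨dist z v - r', ⟨?_, ?_⟩, ?_⟩
    · have : gp v u z ≤ dist z v := gp_le_right v u z
      linarith
    · linarith
    · exact hfel

end Helpers
section Diverge

variable {Z : Type*} [MetricSpace Z]

/-- Any point on a geodesic joining the ends of a chain of `2^n` steps of size `≤ Λ`
is within `n·δ + Λ` of the chain. -/
lemma diverge {δ : ℝ} (hZ : IsDeltaHyperbolic Z δ) (hδ : 0 ≤ δ)
    (hgeo : IsGeodesicSpace Z) (Λ : ℝ) :
    ∀ n : ℕ, ∀ c : ℕ → Z, (∀ k, dist (c k) (c (k+1)) ≤ Λ) →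
    ∀ τ : ℝ → Z, IsGeodesicOn τ (c 0) (dist (c 0) (c (2^n))) →
      τ (dist (c 0) (c (2^n))) = c (2^n) →
    ∀ r ∈ Icc (0:ℝ) (dist (c 0) (c (2^n))),
      ∃ k ≤ 2^n, dist (τ r) (c k) ≤ n * δ + Λ := by
  intro n
  induction n with
  | zero =>
    intro c hgap τ hτ hτe r hr
    refine ⟨0, Nat.zero_le _, ?_⟩
    have h1 : dist (τ r) (c 0) = r := hτ.dist_from_start hr
    have h2 : r ≤ dist (c 0) (c 1) := hr.2
    have h3 := hgap 0
    push_cast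
    linarith
  | succ n ih =>
    intro c hgap τ hτ hτe r hr
    set u := c 0 with hu
    set v := c (2^(n+1)) with hv
    set m := c (2^n) with hm
    set L := dist u v with hL
    rcases le_or_gt r (gp u v m) with hcase | hcase
    · -- close to the first-half geodesic
      obtain ⟨α, hα, hαe⟩ := hgeo u m
      have hfel : dist (τ r) (α r) ≤ δ := fellow hZ hδ hτ hτe hα hαe hr.1 hcase
      have hrm : r ∈ Icc (0:ℝ) (dist u m) := by
        refine ⟨hr.1, hcase.trans ?_⟩
        rw [← dist_comm m u]; exact gp_le_right u v m
      obtain ⟨k, hk, hkd⟩ := ih c hgap α hα hαe r hrm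
      refine ⟨k, hk.trans (Nat.pow_le_pow_right (by norm_num) (Nat.le_succ n)), ?_⟩
      have := dist_triangle (τ r) (α r) (c k)
      push_cast
      push_cast at hkd
      linarith
    · -- close to the second-half geodesic, reversed
      obtain ⟨β, hβ, hβe⟩ := hgeo v m
      set c' : ℕ → Z := fun k => c (2^(n+1) - k) with hc'
      have hc'gap : ∀ k, dist (c' k) (c' (k+1)) ≤ Λ := by
        intro k
        rcases le_or_gt (k+1) (2^(n+1)) with h | h
        · have he : 2^(n+1) - k = (2^(n+1) - (k+1)) + 1 := by omega
          show dist (c (2^(n+1) - k)) (c (2^(n+1) - (k+1))) ≤ Λ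
          rw [he, dist_comm]
          exact hgap _
        · have h1 : 2^(n+1) - k = 0 := by omega
          have h2 : 2^(n+1) - (k+1) = 0 := by omega
          show dist (c (2^(n+1) - k)) (c (2^(n+1) - (k+1))) ≤ Λ
          rw [h1, h2, dist_self]
          exact le_trans dist_nonneg (hgap 0)
      have hc'0 : c' 0 = v := by show c (2^(n+1) - 0) = v; rw [Nat.sub_zero]
      have hc'm : c' (2^n) = m := by
        show c (2^(n+1) - 2^n) = m
        have : 2^(n+1) - 2^n = 2^n := by
          rw [pow_succ]; omega
        rw [this]
      -- reversed geodesic τ' from v to u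
      set τ' : ℝ → Z := fun t => τ (L - t) with hτ'
      have hLvu : dist v u = L := dist_comm v u
      have hτ'geo : IsGeodesicOn τ' v (dist v u) := by
        constructor
        · show τ (L - 0) = v; rw [sub_zero]; exact hτe
        · intro s hs t ht
          rw [hLvu] at hs ht
          have hsm : L - s ∈ Icc (0:ℝ) L := ⟨by linarith [hs.2], by linarith [hs.1]⟩
          have htm : L - t ∈ Icc (0:ℝ) L := ⟨by linarith [ht.2], by linarith [ht.1]⟩
          show dist (τ (L - s)) (τ (L - t)) = |s - t|
          rw [hτ.2 _ hsm _ htm, show L - s - (L - t) = -(s - t) by ring, abs_neg]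
      have hτ'end : τ' (dist v u) = u := by
        show τ (L - dist v u) = u
        rw [hLvu, sub_self]; exact hτ.1
      set r' := L - r with hr'
      have hswap : gp u v m = dist v u - gp v u m := gp_base_swap u v m
      have hr'le : r' ≤ gp v u m := by
        have : gp u v m = L - gp v u m := by rw [hswap, hLvu]
        rw [hr']; linarith
      have hr'0 : 0 ≤ r' := by rw [hr']; linarith [hr.2]
      have hfel := fellow hZ hδ hτ'geo hτ'end hβ hβe hr'0 hr'le
      have hτ'r : τ' r' = τ r := by
        show τ (L - (L - r)) = τ r
        congr 1; ring
      rw [hτ'r] at hfel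
      -- apply IH to reversed chain with basepoint v
      have hrm : r' ∈ Icc (0:ℝ) (dist v m) := by
        refine ⟨hr'0, hr'le.trans ?_⟩
        rw [← dist_comm m v]; exact gp_le_right v u m
      have hβ' : IsGeodesicOn β (c' 0) (dist (c' 0) (c' (2^n))) := by
        rw [hc'0, hc'm]; exact hβ
      have hβ'e : β (dist (c' 0) (c' (2^n))) = c' (2^n) := by
        rw [hc'0, hc'm]; exact hβe
      have hrm' : r' ∈ Icc (0:ℝ) (dist (c' 0) (c' (2^n))) := by
        rw [hc'0, hc'm]; exact hrm
      obtain ⟨k, hk, hkd⟩ := ih c' hc'gap β hβ' hβ'e r' hrm'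
      refine ⟨2^(n+1) - k, Nat.sub_le _ _, ?_⟩
      have := dist_triangle (τ r) (β r') (c' k)
      have hck : c' k = c (2^(n+1) - k) := rfl
      rw [hck] at this hkd
      push_cast
      push_cast at hkd
      linarith

end Diverge
section Morse

variable {Z : Type*} [MetricSpace Z]

lemma sqrt_add_le {a b : ℝ} (ha : 0 ≤ a) (hb : 0 ≤ b) :
    Real.sqrt (a + b) ≤ Real.sqrt a + Real.sqrt b := by
  have h := Real.sqrt_le_sqrt (show a + b ≤ (Real.sqrt a + Real.sqrt b)^2 by
    nlinarith [Real.sq_sqrt ha, Real.sq_sqrt hb, Real.sqrt_nonneg a, Real.sqrt_nonneg b])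
  rwa [Real.sqrt_sq (by positivity)] at h

set_option maxHeartbeats 2000000 in
/-- Morse-type stability: a geodesic joining the endpoints of a quasi-geodesic
chain stays uniformly close to the chain. -/
lemma morse {δ : ℝ} (hZ : IsDeltaHyperbolic Z δ) (hδ : 0 ≤ δ)
    (hgeo : IsGeodesicSpace Z) (Λ l2 μ2 : ℝ) (hΛ : 1 ≤ Λ) (hl2 : 0 < l2) (hμ2 : 0 ≤ μ2) :
    ∃ D0 : ℝ, 0 < D0 ∧ ∀ (K : ℕ) (y : ℕ → Z),
      (∀ k, dist (y k) (y (k+1)) ≤ Λ) →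
      (∀ j k : ℕ, j ≤ K → k ≤ K → l2 * (|(j:ℝ) - (k:ℝ)| - 1) - μ2 ≤ dist (y j) (y k)) →
      ∀ τ : ℝ → Z, IsGeodesicOn τ (y 0) (dist (y 0) (y K)) →
        τ (dist (y 0) (y K)) = y K →
      ∀ r ∈ Icc (0:ℝ) (dist (y 0) (y K)), ∃ k ≤ K, dist (τ r) (y k) ≤ D0 := by
  obtain ⟨A, hA⟩ : ∃ A : ℝ, A = 3 * δ * Real.sqrt (8 / l2) := ⟨_, rfl⟩
  obtain ⟨c₁, hc₁⟩ : ∃ c₁ : ℝ, c₁ = Real.sqrt ((μ2 + l2) / l2) := ⟨_, rfl⟩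
  obtain ⟨B, hB⟩ : ∃ B : ℝ, B = 1 + Λ + 3 * δ + 3 * δ * c₁ := ⟨_, rfl⟩
  have hA0 : 0 ≤ A := by rw [hA]; positivity
  have hc₁0 : 0 ≤ c₁ := by rw [hc₁]; positivity
  have hB0 : 0 ≤ B := by rw [hB]; positivity
  obtain ⟨D0, hD0⟩ : ∃ D0 : ℝ, D0 = 4 * A^2 + 4 * (A + B) + 2 * δ + Λ + 10 := ⟨_, rfl⟩
  have hD0pos : 0 < D0 := by rw [hD0]; positivity
  refine ⟨D0, hD0pos, ?_⟩
  intro K y hgap hlow τ hτ hτe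
  set L := dist (y 0) (y K) with hLdef
  have hL0 : 0 ≤ L := dist_nonneg
  -- the "distance to the chain" function and its sup D
  set S : ℝ → Set ℝ := fun r => {d : ℝ | ∃ k, k ≤ K ∧ d = dist (τ r) (y k)} with hS
  have hSne : ∀ r, (S r).Nonempty := fun r => ⟨dist (τ r) (y 0), 0, Nat.zero_le _, rfl⟩
  have hSbdd : ∀ r, BddBelow (S r) := fun r => ⟨0, by rintro d ⟨k, _, rfl⟩; exact dist_nonneg⟩
  set g : ℝ → ℝ := fun r => sInf (S r) with hg
  have hgL : ∀ r ∈ Icc (0:ℝ) L, g r ≤ L := by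
    intro r hr
    have h1 : g r ≤ dist (τ r) (y 0) := csInf_le (hSbdd r) ⟨0, Nat.zero_le _, rfl⟩
    have h2 : dist (τ r) (y 0) = r := hτ.dist_from_start hr
    linarith [hr.2]
  have hg0 : ∀ r, 0 ≤ g r := fun r =>
    le_csInf (hSne r) (by rintro d ⟨k, _, rfl⟩; exact dist_nonneg)
  set Dset : Set ℝ := g '' Icc 0 L with hDset
  have hDne : Dset.Nonempty := ⟨g 0, 0, ⟨le_rfl, hL0⟩, rfl⟩
  have hDbdd : BddAbove Dset := ⟨L, by rintro e ⟨r, hr, rfl⟩; exact hgL r hr⟩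
  obtain ⟨D, hD⟩ : ∃ D : ℝ, D = sSup Dset := ⟨_, rfl⟩
  have hgD : ∀ r ∈ Icc (0:ℝ) L, g r ≤ D := by
    intro r hr
    rw [hD]; exact le_csSup hDbdd ⟨r, hr, rfl⟩
  have hD0le : 0 ≤ D := le_trans (hg0 0) (hgD 0 ⟨le_rfl, hL0⟩)
  have F1 : ∀ r ∈ Icc (0:ℝ) L, ∃ k ≤ K, dist (τ r) (y k) ≤ D + 1 := by
    intro r hr
    have h1 : g r ≤ D := hgD r hr
    have h2 : sInf (S r) < D + 1 := lt_of_le_of_lt h1 (by linarith)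
    obtain ⟨d, ⟨k, hk, rfl⟩, hd⟩ := exists_lt_of_csInf_lt (hSne r) h2
    exact ⟨k, hk, hd.le⟩
  -- main claim
  have hclaim : D ≤ D0 - 1 := by
    by_contra hcon
    push_neg at hcon
    obtain ⟨E, hE⟩ : ∃ E : ℝ, E = D + 1 := ⟨_, rfl⟩
    rw [← hE] at F1
    have hED0 : D0 ≤ E := by linarith
    have hE1 : 1 ≤ E := by linarith
    have hEδ : 2*δ + 11 ≤ E := by
      have : 2*δ + Λ + 10 ≤ D0 := by
        rw [hD0]; linarith [sq_nonneg A, hA0, hB0]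
      linarith
    -- near-maximizer
    obtain ⟨e, ⟨rs, hrs, rfl⟩, hlt⟩ := exists_lt_of_lt_csSup hDne (show D - 1 < sSup Dset by rw [← hD]; linarith)
    have hfar : ∀ k, k ≤ K → E - 2 ≤ dist (τ rs) (y k) := by
      intro k hk
      have : g rs ≤ dist (τ rs) (y k) := csInf_le (hSbdd rs) ⟨k, hk, rfl⟩
      rw [hE]; linarith
    set w := τ rs with hw
    set r₁ : ℝ := max 0 (rs - 3*E) with hr₁
    set r₂ : ℝ := min L (rs + 3*E) with hr₂
    have hr₁mem : r₁ ∈ Icc (0:ℝ) L := ⟨le_max_left _ _, max_le hL0 (by linarith [hrs.2])⟩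
    have hr₂mem : r₂ ∈ Icc (0:ℝ) L := ⟨le_min hL0 (by linarith [hrs.1]), min_le_left _ _⟩
    have hr₁le : r₁ ≤ rs := max_le hrs.1 (by linarith)
    have hr₂ge : rs ≤ r₂ := le_min hrs.2 (by linarith)
    set w₁ := τ r₁ with hw₁
    set w₂ := τ r₂ with hw₂
    have hww₁ : dist w w₁ = rs - r₁ := by
      rw [hw, hw₁, hτ.2 rs hrs r₁ hr₁mem, abs_of_nonneg (by linarith)]
    have hww₂ : dist w w₂ = r₂ - rs := by
      rw [hw, hw₂, hτ.2 rs hrs r₂ hr₂mem, abs_of_nonpos (by linarith), neg_sub]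
    have hww₁3 : dist w w₁ ≤ 3*E := by rw [hww₁]; have := le_max_right (0:ℝ) (rs - 3*E); linarith [le_max_right (0:ℝ) (rs - 3*E)]
    have hww₂3 : dist w w₂ ≤ 3*E := by rw [hww₂]; linarith [le_min_iff.1 (le_refl r₂) |>.2, min_le_right L (rs + 3*E)]
    -- choose near chain points at w₁, w₂, with degenerate-case info
    have hk1ex : ∃ k1, k1 ≤ K ∧ dist w₁ (y k1) ≤ E ∧ (3*E ≤ dist w w₁ ∨ dist w₁ (y k1) = 0) := by
      rcases le_or_gt (rs - 3*E) 0 with hdeg | hpos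
      · have hr₁0 : r₁ = 0 := max_eq_left hdeg
        refine ⟨0, Nat.zero_le _, ?_, Or.inr ?_⟩
        · rw [hw₁, hr₁0, hτ.1, dist_self]; linarith
        · rw [hw₁, hr₁0, hτ.1, dist_self]
      · have hr₁v : r₁ = rs - 3*E := max_eq_right hpos.le
        obtain ⟨k1, hk1, hd⟩ := F1 r₁ hr₁mem
        exact ⟨k1, hk1, by rw [hw₁]; linarith, Or.inl (by rw [hww₁, hr₁v]; linarith)⟩
    have hk2ex : ∃ k2, k2 ≤ K ∧ dist w₂ (y k2) ≤ E ∧ (3*E ≤ dist w w₂ ∨ dist w₂ (y k2) = 0) := by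
      rcases le_or_gt L (rs + 3*E) with hdeg | hpos
      · have hr₂0 : r₂ = L := min_eq_left hdeg
        refine ⟨K, le_rfl, ?_, Or.inr ?_⟩
        · rw [hw₂, hr₂0, hτe, dist_self]; linarith
        · rw [hw₂, hr₂0, hτe, dist_self]
      · have hr₂v : r₂ = rs + 3*E := min_eq_right hpos.le
        obtain ⟨k2, hk2, hd⟩ := F1 r₂ hr₂mem
        exact ⟨k2, hk2, by rw [hw₂]; linarith, Or.inl (by rw [hww₂, hr₂v]; linarith)⟩
    obtain ⟨k1, hk1K, hk1d, hfar1⟩ := hk1ex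
    obtain ⟨k2, hk2K, hk2d, hfar2⟩ := hk2ex
    set z₁ := y k1 with hz₁
    set z₂ := y k2 with hz₂
    -- restricted geodesic from w₁ to w₂
    have hd12 : dist w₁ w₂ = r₂ - r₁ := by
      rw [hw₁, hw₂, hτ.2 r₁ hr₁mem r₂ hr₂mem, abs_of_nonpos (by linarith), neg_sub]
    set σ' : ℝ → Z := fun t => τ (r₁ + t) with hσ'
    have hσ'geo : IsGeodesicOn σ' w₁ (dist w₁ w₂) := by
      rw [hd12]
      constructor
      · show τ (r₁ + 0) = w₁; rw [add_zero]
      · intro s hs t ht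
        have hsm : r₁ + s ∈ Icc (0:ℝ) L :=
          ⟨by linarith [hr₁mem.1, hs.1], by linarith [hs.2, hr₂mem.2]⟩
        have htm : r₁ + t ∈ Icc (0:ℝ) L :=
          ⟨by linarith [hr₁mem.1, ht.1], by linarith [ht.2, hr₂mem.2]⟩
        show dist (τ (r₁ + s)) (τ (r₁ + t)) = |s - t|
        rw [hτ.2 _ hsm _ htm, show r₁ + s - (r₁ + t) = s - t by ring]
    have hσ'end : σ' (dist w₁ w₂) = w₂ := by
      rw [hd12]; show τ (r₁ + (r₂ - r₁)) = w₂; rw [show r₁ + (r₂ - r₁) = r₂ by ring]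
    have hrmem : rs - r₁ ∈ Icc (0:ℝ) (dist w₁ w₂) := by
      rw [hd12]; exact ⟨by linarith, by linarith⟩
    have hweq : σ' (rs - r₁) = w := by
      show τ (r₁ + (rs - r₁)) = w; rw [show r₁ + (rs - r₁) = rs by ring]
    obtain ⟨α₁, hα₁, hα₁e⟩ := hgeo w₁ z₂
    obtain ⟨β₁, hβ₁, hβ₁e⟩ := hgeo z₂ w₂
    have hthin1 := thin hZ hδ hσ'geo hσ'end hα₁ hα₁e hβ₁ hβ₁e hrmem
    rw [hweq] at hthin1
    rcases hthin1 with ⟨t, ht, hcl⟩ | ⟨t, ht, hcl⟩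
    swap
    · -- close to [z₂, w₂] : contradiction
      exfalso
      have hbd : dist (β₁ t) w₂ ≤ dist z₂ w₂ := by
        have h1 : dist (β₁ t) (β₁ (dist z₂ w₂)) = dist z₂ w₂ - t := hβ₁.dist_to_end ht
        rw [hβ₁e] at h1
        rw [h1]; linarith [ht.1]
      have hzw : dist z₂ w₂ ≤ E := by rw [dist_comm]; exact hk2d
      rcases hfar2 with h3E | h0
      · have : dist w w₂ ≤ dist w (β₁ t) + dist (β₁ t) w₂ := dist_triangle _ _ _
        have : 2*E ≤ dist w (β₁ t) := by linarith
        linarith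
      · have hzw0 : dist z₂ w₂ = 0 := by rw [dist_comm]; exact h0
        have ht0 : t = 0 := le_antisymm (by linarith [ht.2, hzw0]) ht.1
        have hβ₁0 : β₁ t = z₂ := by rw [ht0]; exact hβ₁.1
        have : E - 2 ≤ dist w (β₁ t) := by rw [hβ₁0]; exact hfar k2 hk2K
        linarith
    -- now w is δ-close to α₁ t on [w₁, z₂]
    obtain ⟨α₂, hα₂, hα₂e⟩ := hgeo w₁ z₁
    obtain ⟨γC, hγC, hγCe⟩ := hgeo z₁ z₂
    have hthin2 := thin hZ hδ hα₁ hα₁e hα₂ hα₂e hγC hγCe ht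
    rcases hthin2 with ⟨t2, ht2, hcl2⟩ | ⟨t3, ht3, hcl3⟩
    · -- close to [w₁, z₁] : contradiction
      exfalso
      have hwt2 : dist w (α₂ t2) ≤ 2*δ :=
        le_trans (dist_triangle w (α₁ t) (α₂ t2)) (by linarith)
      have hbd : dist w₁ (α₂ t2) ≤ dist w₁ z₁ := by
        have h1 : dist (α₂ t2) w₁ = t2 := hα₂.dist_from_start ht2
        rw [dist_comm]; rw [h1]; linarith [ht2.2]
      have hwz : dist w₁ z₁ ≤ E := hk1d
      rcases hfar1 with h3E | h0
      · have := dist_triangle w w₁ (α₂ t2)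
        have h4 : dist w₁ (α₂ t2) ≤ E := le_trans hbd hwz
        have : 2*E ≤ dist w (α₂ t2) := by
          have h5 := dist_triangle w₁ (α₂ t2) w
          have h6 : dist w₁ w = dist w w₁ := dist_comm _ _
          have h7 : dist (α₂ t2) w = dist w (α₂ t2) := dist_comm _ _
          linarith
        linarith
      · have ht20 : t2 = 0 := by
          have : dist w₁ z₁ = 0 := h0
          exact le_antisymm (by linarith [ht2.2, this]) ht2.1
        have : α₂ t2 = w₁ := by rw [ht20]; exact hα₂.1
        rw [this] at hwt2
        have hw₁z : w₁ = y k1 := by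
          have := h0; rwa [dist_eq_zero] at this
        rw [hw₁z] at hwt2
        have := hfar k1 hk1K
        linarith
    -- main case: w is 2δ-close to γC t3 on [z₁, z₂]
    have hwc : dist w (γC t3) ≤ 2*δ :=
      le_trans (dist_triangle w (α₁ t) (γC t3)) (by linarith)
    -- bound on |k1-k2|
    have hz₁z₂ : dist z₁ z₂ ≤ 8*E := by
      have t1 : dist z₁ z₂ ≤ dist z₁ w₁ + dist w₁ z₂ := dist_triangle _ _ _
      have t2 : dist w₁ z₂ ≤ dist w₁ w + dist w z₂ := dist_triangle _ _ _
      have t3' : dist w z₂ ≤ dist w w₂ + dist w₂ z₂ := dist_triangle _ _ _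
      have e1 : dist z₁ w₁ ≤ E := by rw [dist_comm]; exact hk1d
      have e2 : dist w₁ w = dist w w₁ := dist_comm _ _
      have e4 : dist w₂ z₂ ≤ E := hk2d
      linarith
    obtain ⟨dd, hdd⟩ : ∃ dd : ℕ, dd = max k1 k2 - min k1 k2 := ⟨_, rfl⟩
    have hddr : |(k1:ℝ) - (k2:ℝ)| = (dd:ℝ) := by
      rcases le_total k1 k2 with h | h
      · rw [hdd, max_eq_right h, min_eq_left h, Nat.cast_sub h, abs_sub_comm,
          abs_of_nonneg (sub_nonneg.2 ((Nat.cast_le (α := ℝ)).2 h))]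
      · rw [hdd, max_eq_left h, min_eq_right h, Nat.cast_sub h,
          abs_of_nonneg (sub_nonneg.2 ((Nat.cast_le (α := ℝ)).2 h))]
    have hlow12 := hlow k1 k2 hk1K hk2K
    rw [hddr] at hlow12
    obtain ⟨mh, hmh⟩ : ∃ mh : ℝ, mh = (8*E + μ2) / l2 + 1 := ⟨_, rfl⟩
    have hmh1 : 1 ≤ mh := by
      rw [hmh]
      have : 0 ≤ (8*E + μ2) / l2 := div_nonneg (by linarith) hl2.le
      linarith
    have hddmh : (dd:ℝ) ≤ mh := by
      have h1 : l2 * ((dd:ℝ) - 1) ≤ 8*E + μ2 := by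
        have : dist (y k1) (y k2) ≤ 8*E := hz₁z₂
        linarith
      have h2 : (dd:ℝ) - 1 ≤ (8*E + μ2) / l2 := (le_div_iff₀' hl2).2 h1
      rw [hmh]; linarith
    obtain ⟨n, hn⟩ : ∃ n : ℕ, n = ⌈Real.logb 2 mh⌉₊ := ⟨_, rfl⟩
    have h2n : mh ≤ (2:ℝ)^n := by
      calc mh = (2:ℝ) ^ (Real.logb 2 mh) := (Real.rpow_logb (by norm_num) (by norm_num) (by linarith)).symm
        _ ≤ (2:ℝ) ^ ((n:ℝ)) := Real.rpow_le_rpow_of_exponent_le (by norm_num) (by rw [hn]; exact Nat.le_ceil _)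
        _ = (2:ℝ)^n := Real.rpow_natCast 2 n
    have hddn : dd ≤ 2^n := by
      have : (dd:ℝ) ≤ ((2^n : ℕ):ℝ) := by push_cast; linarith
      exact_mod_cast this
    have hnle : (n:ℝ) ≤ Real.logb 2 mh + 1 := by
      rw [hn]
      exact (Nat.ceil_lt_add_one (Real.logb_nonneg (by norm_num) hmh1)).le
    -- build the chain from z₁ to z₂
    set idx : ℕ → ℕ := fun i => if k1 ≤ k2 then min (k1 + i) k2 else k1 - min i (k1 - k2) with hidx
    set cc : ℕ → Z := fun i => y (idx i) with hcc
    have hidx0 : idx 0 = k1 := by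
      by_cases h : k1 ≤ k2 <;> simp only [hidx, h, if_true, if_false] <;> omega
    have hidxK : ∀ i, idx i ≤ K := by
      intro i
      by_cases h : k1 ≤ k2 <;> simp only [hidx, h, if_true, if_false] <;> omega
    have hidxend : idx (2^n) = k2 := by
      have hdn : dd ≤ 2^n := hddn
      rw [hdd] at hdn
      by_cases h : k1 ≤ k2 <;> simp only [hidx, h, if_true, if_false]
      · rw [max_eq_right h, min_eq_left h] at hdn; omega
      · rw [max_eq_left (le_of_not_ge h), min_eq_right (le_of_not_ge h)] at hdn; omega
    have hccgap : ∀ i, dist (cc i) (cc (i+1)) ≤ Λ := by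
      intro i
      have hstep : idx (i+1) = idx i ∨ idx (i+1) = idx i + 1 ∨ idx i = idx (i+1) + 1 := by
        by_cases h : k1 ≤ k2 <;> simp only [hidx, h, if_true, if_false] <;> omega
      rcases hstep with h | h | h
      · show dist (y (idx i)) (y (idx (i+1))) ≤ Λ
        rw [h, dist_self]; linarith
      · show dist (y (idx i)) (y (idx (i+1))) ≤ Λ
        rw [h]; exact hgap _
      · show dist (y (idx i)) (y (idx (i+1))) ≤ Λ
        rw [h, dist_comm]; exact hgap _
    have hcc0 : cc 0 = z₁ := by show y (idx 0) = z₁; rw [hidx0]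
    have hccend : cc (2^n) = z₂ := by show y (idx (2^n)) = z₂; rw [hidxend]
    have hγC' : IsGeodesicOn γC (cc 0) (dist (cc 0) (cc (2^n))) := by
      rw [hcc0, hccend]; exact hγC
    have hγC'e : γC (dist (cc 0) (cc (2^n))) = cc (2^n) := by
      rw [hcc0, hccend]; exact hγCe
    have ht3' : t3 ∈ Icc (0:ℝ) (dist (cc 0) (cc (2^n))) := by
      rw [hcc0, hccend]; exact ht3
    obtain ⟨k, hk2n, hkd⟩ := diverge hZ hδ hgeo Λ n cc hccgap γC hγC' hγC'e t3 ht3'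
    have hfin1 : E - 2 ≤ dist w (cc k) := hfar (idx k) (hidxK k)
    have hfin2 : dist w (cc k) ≤ 2*δ + ((n:ℝ) * δ + Λ) :=
      le_trans (dist_triangle w (γC t3) (cc k)) (by linarith)
    -- final arithmetic
    have hlogb : Real.logb 2 mh ≤ 3 * Real.sqrt mh := by
      have hmhpos : (0:ℝ) < mh := by linarith
      have hsq : Real.log mh = 2 * Real.log (Real.sqrt mh) := by
        rw [Real.log_sqrt hmhpos.le]; ring
      have hs1 : Real.log (Real.sqrt mh) ≤ Real.sqrt mh - 1 :=
        Real.log_le_sub_one_of_pos (Real.sqrt_pos.2 hmhpos)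
      have hlog : Real.log mh ≤ 2 * Real.sqrt mh := by
        have := Real.sqrt_nonneg mh
        linarith
      have hlog2 : (0.6931471803:ℝ) < Real.log 2 := Real.log_two_gt_d9
      have hlogmh0 : 0 ≤ Real.log mh := Real.log_nonneg hmh1
      have hlb : Real.logb 2 mh = Real.log mh / Real.log 2 := rfl
      rw [hlb, div_le_iff₀ (by linarith : (0:ℝ) < Real.log 2)]
      have h5 : 3*Real.sqrt mh*(0.6931471803:ℝ) ≤ 3*Real.sqrt mh*Real.log 2 :=
        mul_le_mul_of_nonneg_left hlog2.le (by positivity)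
      have h6 : 2*Real.sqrt mh ≤ 3*Real.sqrt mh*(0.6931471803:ℝ) := by
        have := Real.sqrt_nonneg mh
        linarith
      linarith
    have hsqmh : Real.sqrt mh ≤ Real.sqrt (8/l2) * Real.sqrt E + c₁ := by
      have hmheq : mh = (8/l2) * E + (μ2 + l2)/l2 := by
        rw [hmh]; field_simp; ring
      rw [hmheq]
      have h8 : (0:ℝ) ≤ 8/l2 := by positivity
      have hE0 : (0:ℝ) ≤ E := by linarith
      have := sqrt_add_le (mul_nonneg h8 hE0) (div_nonneg (by linarith : (0:ℝ) ≤ μ2 + l2) hl2.le)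
      rw [Real.sqrt_mul h8] at this
      rw [hc₁]
      exact this
    have hsqE : Real.sqrt E ≤ Real.sqrt D + 1 := by
      have := sqrt_add_le hD0le (by norm_num : (0:ℝ) ≤ 1)
      rw [Real.sqrt_one] at this
      rw [hE]; exact this
    -- D ≤ A √D + (A + B)
    have hmain : D ≤ A * Real.sqrt D + (A + B) := by
      have h1 : D - 1 ≤ 2*δ + (n:ℝ)*δ + Λ := by
        have : E - 2 ≤ 2*δ + ((n:ℝ)*δ + Λ) := le_trans hfin1 hfin2
        rw [hE] at this; linarith
      have h2 : (n:ℝ) * δ ≤ (3 * Real.sqrt mh + 1) * δ := by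
        apply mul_le_mul_of_nonneg_right _ hδ
        linarith
      have h2' : (3 * Real.sqrt mh + 1) * δ = 3*(Real.sqrt mh * δ) + δ := by ring
      have h3 : Real.sqrt mh * δ ≤ (Real.sqrt (8/l2) * Real.sqrt E + c₁) * δ :=
        mul_le_mul_of_nonneg_right hsqmh hδ
      have h3' : (Real.sqrt (8/l2) * Real.sqrt E + c₁) * δ =
          Real.sqrt (8/l2) * Real.sqrt E * δ + c₁ * δ := by ring
      have h4 : Real.sqrt (8/l2) * Real.sqrt E * δ ≤ Real.sqrt (8/l2) * (Real.sqrt D + 1) * δ := by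
        apply mul_le_mul_of_nonneg_right _ hδ
        apply mul_le_mul_of_nonneg_left hsqE (Real.sqrt_nonneg _)
      have h4' : Real.sqrt (8/l2) * (Real.sqrt D + 1) * δ =
          Real.sqrt (8/l2) * Real.sqrt D * δ + Real.sqrt (8/l2) * δ := by ring
      rw [hA, hB]
      have e1 : 3*δ*Real.sqrt (8/l2) * Real.sqrt D = 3*(Real.sqrt (8/l2) * Real.sqrt D * δ) := by
        ring
      have e2 : 3*δ*Real.sqrt (8/l2) = 3*(Real.sqrt (8/l2) * δ) := by ring
      have e3 : 3*δ*c₁ = 3*(c₁*δ) := by ring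
      linarith
    -- contradiction
    have hD4A : 4 * A^2 ≤ D := by linarith [sq_nonneg A]
    have hD4AB : 4 * (A + B) ≤ D := by linarith [sq_nonneg A]
    have hsD : 2 * A ≤ Real.sqrt D := by
      have h1 : Real.sqrt (4 * A^2) ≤ Real.sqrt D := Real.sqrt_le_sqrt hD4A
      rwa [show (4:ℝ) * A^2 = (2*A)^2 by ring, Real.sqrt_sq (by linarith)] at h1
    have hAs : A * Real.sqrt D ≤ D / 2 := by
      have h1 : A * Real.sqrt D ≤ (Real.sqrt D / 2) * Real.sqrt D := by
        apply mul_le_mul_of_nonneg_right _ (Real.sqrt_nonneg D)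
        linarith
      have h2 : Real.sqrt D * Real.sqrt D = D := Real.mul_self_sqrt hD0le
      have h3 : (Real.sqrt D / 2) * Real.sqrt D = (Real.sqrt D * Real.sqrt D)/2 := by ring
      linarith
    have hDpos : 9 ≤ D := by
      have : (10:ℝ) ≤ D0 := by rw [hD0]; linarith [sq_nonneg A, hA0, hB0]
      linarith
    linarith
  -- conclude
  intro r hr
  obtain ⟨k, hk, hkd⟩ := F1 r hr
  exact ⟨k, hk, by linarith⟩

end Morse
section Seqs

variable {Z : Type*} [MetricSpace Z]

lemma tendstoPP {F : ℕ × ℕ → ℝ} :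
    Tendsto F atTop atTop ↔ ∀ C : ℝ, ∃ N : ℕ, ∀ i j : ℕ, N ≤ i → N ≤ j → C ≤ F (i, j) := by
  rw [Filter.tendsto_atTop]
  constructor
  · intro h C
    obtain ⟨⟨N₁, N₂⟩, hN⟩ := eventually_atTop.1 (h C)
    exact ⟨max N₁ N₂, fun i j hi hj =>
      hN (i, j) ⟨le_trans (le_max_left _ _) hi, le_trans (le_max_right _ _) hj⟩⟩
  · intro h C
    obtain ⟨N, hN⟩ := h C
    rw [eventually_atTop]
    exact ⟨(N, N), fun p hp => hN p.1 p.2 hp.1 hp.2⟩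

lemma convSeq_iff {a : Z} {x : ℕ → Z} :
    ConvSeq a x ↔ ∀ C : ℝ, ∃ N : ℕ, ∀ i j : ℕ, N ≤ i → N ≤ j → C ≤ gp a (x i) (x j) :=
  tendstoPP

lemma seqEquiv_iff {a : Z} {x y : ℕ → Z} :
    SeqEquiv a x y ↔ ∀ C : ℝ, ∃ N : ℕ, ∀ i j : ℕ, N ≤ i → N ≤ j → C ≤ gp a (x i) (y j) :=
  tendstoPP

lemma seqEquiv_symm {a : Z} {x y : ℕ → Z} (h : SeqEquiv a x y) : SeqEquiv a y x := by
  rw [seqEquiv_iff] at h ⊢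
  intro C
  obtain ⟨N, hN⟩ := h C
  exact ⟨N, fun i j hi hj => (gp_comm a (y i) (x j)) ▸ hN j i hj hi⟩

lemma seqEquiv_trans {δ : ℝ} (hZ : IsDeltaHyperbolic Z δ) {a : Z} {x y z : ℕ → Z}
    (h1 : SeqEquiv a x y) (h2 : SeqEquiv a y z) : SeqEquiv a x z := by
  rw [seqEquiv_iff] at h1 h2 ⊢
  intro C
  obtain ⟨N₁, hN₁⟩ := h1 (C + δ/4)
  obtain ⟨N₂, hN₂⟩ := h2 (C + δ/4)
  refine ⟨max N₁ N₂, fun i j hi hj => ?_⟩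
  have g1 : C + δ/4 ≤ gp a (x i) (y (max N₁ N₂)) :=
    hN₁ i (max N₁ N₂) (le_trans (le_max_left _ _) hi) (le_max_left _ _)
  have g2 : C + δ/4 ≤ gp a (y (max N₁ N₂)) (z j) :=
    hN₂ (max N₁ N₂) j (le_max_right _ _) (le_trans (le_max_right _ _) hj)
  have h := hZ (x i) (z j) (y (max N₁ N₂)) a
  have : C + δ/4 ≤ min (gp a (x i) (y (max N₁ N₂))) (gp a (y (max N₁ N₂)) (z j)) :=
    le_min g1 g2
  linarith

lemma bpt_eq_seqEquiv {δ : ℝ} (hZ : IsDeltaHyperbolic Z δ) {b : Z} {u v : ℕ → Z}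
    (hu : ConvSeq b u) (hv : ConvSeq b v)
    (h : bpt b u hu = bpt b v hv) : SeqEquiv b u v := by
  have resp : ∀ s s' : BSeq b, (fun x y : BSeq b => SeqEquiv b x.1 y.1) s s' →
      SeqEquiv b u s.1 = SeqEquiv b u s'.1 := by
    intro s s' hss'
    exact propext ⟨fun h' => seqEquiv_trans hZ h' hss',
      fun h' => seqEquiv_trans hZ h' (seqEquiv_symm hss')⟩
  have hP : Quot.lift (fun s : BSeq b => SeqEquiv b u s.1) resp (bpt b u hu) := hu
  rw [h] at hP
  exact hP

end Seqs
section Master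

set_option maxHeartbeats 1000000 in
lemma radial_estimates {X : Type*} [MetricSpace X] {Y : Type*} [MetricSpace Y] {δ : ℝ}
    (hX : IsDeltaHyperbolic X δ) (hY : IsDeltaHyperbolic Y δ) (hδ : 0 ≤ δ)
    (hgX : IsGeodesicSpace X) (hgY : IsGeodesicSpace Y)
    (f : X → Y) (a : X) {l1 μ1 l2 μ2 : ℝ}
    (hl1 : 0 < l1) (hμ1 : 0 < μ1) (hl2 : 0 < l2) (hμ2 : 0 < μ2)
    (hLSL : IsLSL f l1 μ1) (hrad : IsRadialWith f a l2 μ2) :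
    ∃ CK D0 : ℝ, 0 < D0 ∧
      (∀ x₁ x₂ : X, l2 * gp a x₁ x₂ - CK ≤ gp (f a) (f x₁) (f x₂)) ∧
      (∀ x' : X, ∀ τ : ℝ → Y, IsGeodesicOn τ (f a) (dist (f a) (f x')) →
        τ (dist (f a) (f x')) = f x' →
        ∀ r ∈ Icc (0:ℝ) (dist (f a) (f x')), ∃ x₀ : X, dist (τ r) (f x₀) ≤ D0) := by
  obtain ⟨Λ, hΛdef⟩ : ∃ Λ : ℝ, Λ = l1 + μ1 + 1 := ⟨_, rfl⟩
  have hΛ : 1 ≤ Λ := by rw [hΛdef]; linarith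
  obtain ⟨D0, hD0pos, hmorse⟩ := morse hY hδ hgY Λ l2 μ2 hΛ hl2 hμ2.le
  -- chain lemma: points on the geodesic [b, f x'] are close to the f-image of [a,x']
  have hchain : ∀ (x' : X) (γ : ℝ → X), IsGeodesicOn γ a (dist a x') →
      γ (dist a x') = x' → ∀ s, 0 ≤ s → s ≤ dist a x' →
      ∀ τ : ℝ → Y, IsGeodesicOn τ (f (γ s)) (dist (f (γ s)) (f x')) →
      τ (dist (f (γ s)) (f x')) = f x' →
      ∀ r ∈ Icc (0:ℝ) (dist (f (γ s)) (f x')),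
        ∃ u : ℝ, s ≤ u ∧ u ≤ dist a x' ∧ dist (τ r) (f (γ u)) ≤ D0 := by
    intro x' γ hγ hγe s hs0 hsM τ hτ hτe r hr
    obtain ⟨M, hMdef⟩ : ∃ M : ℝ, M = dist a x' := ⟨_, rfl⟩
    rw [← hMdef] at hγ hγe hsM ⊢
    have hM0 : 0 ≤ M := hMdef ▸ dist_nonneg
    set m : ℕ → ℝ := fun k => min (s + k) M with hm
    set K : ℕ := ⌈M - s⌉₊ with hK
    set y : ℕ → Y := fun k => f (γ (m k)) with hy
    have hmmem : ∀ k, m k ∈ Icc (0:ℝ) M := fun k =>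
      ⟨le_min (add_nonneg hs0 (Nat.cast_nonneg k)) hM0, min_le_right _ _⟩
    have hm0 : m 0 = s := by
      show min (s + ((0:ℕ):ℝ)) M = s
      rw [Nat.cast_zero, add_zero]; exact min_eq_left hsM
    have hmK : m K = M := by
      show min (s + ((K:ℕ):ℝ)) M = M
      apply min_eq_right
      have := Nat.le_ceil (M - s)
      rw [← hK] at this
      linarith
    have hy0 : y 0 = f (γ s) := by show f (γ (m 0)) = f (γ s); rw [hm0]
    have hyK : y K = f x' := by show f (γ (m K)) = f x'; rw [hmK, hγe]
    have hmono : ∀ j k : ℕ, j ≤ k → m j ≤ m k := by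
      intro j k h
      exact min_le_min (by exact add_le_add_right (Nat.cast_le.2 h) s) le_rfl
    have hgaps : ∀ k, dist (y k) (y (k+1)) ≤ Λ := by
      intro k
      have h1 : dist (f (γ (m k))) (f (γ (m (k+1)))) ≤ l1 * dist (γ (m k)) (γ (m (k+1))) + μ1 :=
        hLSL _ _
      have h2 : dist (γ (m k)) (γ (m (k+1))) = |m k - m (k+1)| :=
        hγ.2 _ (hmmem k) _ (hmmem (k+1))
      have h3 : |m k - m (k+1)| ≤ 1 := by
        have hlo : m k ≤ m (k+1) := hmono k (k+1) (Nat.le_succ k)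
        have hhi : m (k+1) ≤ m k + 1 := by
          show min (s + ((k:ℕ)+1:ℕ)) M ≤ min (s + k) M + 1
          push_cast
          rcases le_total (s + ((k:ℝ)+1)) M with h | h
          · rw [min_eq_left h, min_eq_left (by linarith : s + (k:ℝ) ≤ M)]; linarith
          · rcases le_total (s + (k:ℝ)) M with h' | h'
            · rw [min_eq_right h, min_eq_left h']; linarith
            · rw [min_eq_right h, min_eq_right h']; linarith
        rw [abs_le]; constructor <;> linarith
      have h4 : l1 * |m k - m (k+1)| ≤ l1 * 1 := mul_le_mul_of_nonneg_left h3 hl1.le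
      show dist (f (γ (m k))) (f (γ (m (k+1)))) ≤ Λ
      rw [hΛdef]
      rw [h2] at h1
      linarith
    have hKle : (K:ℝ) ≤ M - s + 1 := by
      rw [hK]
      exact (Nat.ceil_lt_add_one (by linarith)).le
    have hlower : ∀ j k : ℕ, j ≤ K → k ≤ K →
        l2 * (|(j:ℝ) - (k:ℝ)| - 1) - μ2 ≤ dist (y j) (y k) := by
      have hkey : ∀ j k : ℕ, j ≤ K → k ≤ K → (j:ℝ) ≤ (k:ℝ) →
          (k:ℝ) - (j:ℝ) - 1 ≤ m k - m j := by
        intro j k hjK hkK hjk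
        have hkKr : (k:ℝ) ≤ (K:ℝ) := Nat.cast_le.2 hkK
        rcases le_total (s + (k:ℝ)) M with h | h
        · have hmk : m k = s + k := min_eq_left h
          have hmj : m j ≤ s + j := min_le_left _ _
          rw [hmk]; linarith
        · have hmk : m k = M := min_eq_right h
          rcases le_total (s + (j:ℝ)) M with h2 | h2
          · have hmj : m j = s + j := min_eq_left h2
            rw [hmk, hmj]; linarith
          · have hmj : m j = M := min_eq_right h2
            rw [hmk, hmj]
            have hjb : M - s ≤ (j:ℝ) := by linarith
            linarith
      intro j k hjK hkK
      have h2 : dist (γ (m j)) (γ (m k)) = |m j - m k| := hγ.2 _ (hmmem j) _ (hmmem k)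
      have h1 := hrad M hM0 γ hγ (m j) (hmmem j) (m k) (hmmem k)
      rw [h2] at h1
      have habs : |(j:ℝ) - (k:ℝ)| - 1 ≤ |m j - m k| := by
        rcases le_total j k with h | h
        · have hc : (j:ℝ) ≤ (k:ℝ) := Nat.cast_le.2 h
          rw [abs_of_nonpos (by linarith), abs_of_nonpos (by linarith [hmono j k h])]
          have := hkey j k hjK hkK hc
          linarith
        · have hc : (k:ℝ) ≤ (j:ℝ) := Nat.cast_le.2 h
          rw [abs_of_nonneg (by linarith), abs_of_nonneg (by linarith [hmono k j h])]
          have := hkey k j hkK hjK hc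
          linarith
      have h5 : l2 * (|(j:ℝ) - (k:ℝ)| - 1) ≤ l2 * |m j - m k| :=
        mul_le_mul_of_nonneg_left (by linarith) hl2.le
      show l2 * (|(j:ℝ) - (k:ℝ)| - 1) - μ2 ≤ dist (f (γ (m j))) (f (γ (m k)))
      linarith
    have hτ' : IsGeodesicOn τ (y 0) (dist (y 0) (y K)) := by rw [hy0, hyK]; exact hτ
    have hτ'e : τ (dist (y 0) (y K)) = y K := by rw [hy0, hyK]; exact hτe
    have hr' : r ∈ Icc (0:ℝ) (dist (y 0) (y K)) := by rw [hy0, hyK]; exact hr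
    obtain ⟨k, hkK, hkd⟩ := hmorse K y hgaps hlower τ hτ' hτ'e r hr'
    exact ⟨m k, le_min (le_add_of_nonneg_right (Nat.cast_nonneg k)) hsM,
      min_le_right _ _, hkd⟩
  -- Lemma B : Gromov products along an image of a radial geodesic
  have hlemB : ∀ (x' : X) (γ : ℝ → X), IsGeodesicOn γ a (dist a x') →
      γ (dist a x') = x' → ∀ s ∈ Icc (0:ℝ) (dist a x'),
      l2 * s - (μ2 + δ + D0) ≤ gp (f a) (f (γ s)) (f x') := by
    intro x' γ hγ hγe s hsm
    obtain ⟨τ, hτ, hτe⟩ := hgY (f (γ s)) (f x')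
    obtain ⟨α, hα, hαe⟩ := hgY (f (γ s)) (f a)
    obtain ⟨t, htdef⟩ : ∃ t : ℝ, t = gp (f (γ s)) (f a) (f x') := ⟨_, rfl⟩
    have ht0 : 0 ≤ t := htdef ▸ gp_nonneg _ _ _
    have htb : t ≤ dist (f (γ s)) (f a) := by
      rw [htdef, ← dist_comm (f a) (f (γ s))]
      exact gp_le_left _ _ _
    have htv : t ≤ dist (f (γ s)) (f x') := by
      rw [htdef, ← dist_comm (f x') (f (γ s))]
      exact gp_le_right _ _ _
    have hfel : dist (α t) (τ t) ≤ δ :=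
      fellow hY hδ hα hαe hτ hτe ht0 (le_of_eq htdef)
    obtain ⟨u, hu1, hu2, hu3⟩ := hchain x' γ hγ hγe s hsm.1 hsm.2 τ hτ hτe t ⟨ht0, htv⟩
    -- distance of f(γ u) from b
    have hub : l2 * u - μ2 ≤ dist (f (γ u)) (f a) := by
      have h1 := hrad (dist a x') dist_nonneg γ hγ u ⟨le_trans hsm.1 hu1, hu2⟩ 0
        ⟨le_rfl, dist_nonneg⟩
      have h2 : dist (γ u) (γ 0) = |u - 0| := hγ.2 u ⟨le_trans hsm.1 hu1, hu2⟩ 0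
        ⟨le_rfl, dist_nonneg⟩
      rw [h2, sub_zero, abs_of_nonneg (le_trans hsm.1 hu1)] at h1
      rw [hγ.1] at h1
      exact h1
    have hαt : dist (α t) (f a) = dist (f (γ s)) (f a) - t := by
      have h1 : dist (α t) (α (dist (f (γ s)) (f a))) = dist (f (γ s)) (f a) - t :=
        hα.dist_to_end ⟨ht0, htb⟩
      rwa [hαe] at h1
    have hswap : gp (f a) (f (γ s)) (f x') = dist (f (γ s)) (f a) - t := by
      rw [htdef]; exact gp_base_swap _ _ _
    have htri1 : dist (f (γ u)) (f a) ≤ dist (f (γ u)) (α t) + dist (α t) (f a) :=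
      dist_triangle _ _ _
    have htri2 : dist (f (γ u)) (α t) ≤ dist (f (γ u)) (τ t) + dist (τ t) (α t) :=
      dist_triangle _ _ _
    have hc1 : dist (f (γ u)) (τ t) = dist (τ t) (f (γ u)) := dist_comm _ _
    have hc2 : dist (τ t) (α t) = dist (α t) (τ t) := dist_comm _ _
    have hl2u : l2 * s ≤ l2 * u := mul_le_mul_of_nonneg_left hu1 hl2.le
    rw [hswap]
    linarith
  -- the key visual estimate
  obtain ⟨CK, hCKdef⟩ : ∃ CK : ℝ, CK = (μ2 + δ + D0) + μ2 + (l1*δ + μ1)/2 + δ/2 := ⟨_, rfl⟩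
  refine ⟨CK, D0, hD0pos, ?_, ?_⟩
  · intro x₁ x₂
    obtain ⟨T, hTdef⟩ : ∃ T : ℝ, T = gp a x₁ x₂ := ⟨_, rfl⟩
    have hT0 : 0 ≤ T := hTdef ▸ gp_nonneg _ _ _
    obtain ⟨γ₁, hγ₁, hγ₁e⟩ := hgX a x₁
    obtain ⟨γ₂, hγ₂, hγ₂e⟩ := hgX a x₂
    have hTm₁ : T ∈ Icc (0:ℝ) (dist a x₁) := by
      refine ⟨hT0, ?_⟩
      rw [hTdef, ← dist_comm x₁ a]; exact gp_le_left _ _ _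
    have hTm₂ : T ∈ Icc (0:ℝ) (dist a x₂) := by
      refine ⟨hT0, ?_⟩
      rw [hTdef, ← dist_comm x₂ a]; exact gp_le_right _ _ _
    have hfelX : dist (γ₁ T) (γ₂ T) ≤ δ :=
      fellow hX hδ hγ₁ hγ₁e hγ₂ hγ₂e hT0 (le_of_eq hTdef)
    have g1 : l2 * T - (μ2 + δ + D0) ≤ gp (f a) (f (γ₁ T)) (f x₁) :=
      hlemB x₁ γ₁ hγ₁ hγ₁e T hTm₁
    have g2 : l2 * T - (μ2 + δ + D0) ≤ gp (f a) (f (γ₂ T)) (f x₂) :=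
      hlemB x₂ γ₂ hγ₂ hγ₂e T hTm₂
    have du₁ : l2 * T - μ2 ≤ dist (f (γ₁ T)) (f a) := by
      have h1 := hrad (dist a x₁) dist_nonneg γ₁ hγ₁ T hTm₁ 0 ⟨le_rfl, dist_nonneg⟩
      have h2 : dist (γ₁ T) (γ₁ 0) = |T - 0| := hγ₁.2 T hTm₁ 0 ⟨le_rfl, dist_nonneg⟩
      rw [h2, sub_zero, abs_of_nonneg hT0] at h1
      rwa [hγ₁.1] at h1
    have du₂ : l2 * T - μ2 ≤ dist (f (γ₂ T)) (f a) := by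
      have h1 := hrad (dist a x₂) dist_nonneg γ₂ hγ₂ T hTm₂ 0 ⟨le_rfl, dist_nonneg⟩
      have h2 : dist (γ₂ T) (γ₂ 0) = |T - 0| := hγ₂.2 T hTm₂ 0 ⟨le_rfl, dist_nonneg⟩
      rw [h2, sub_zero, abs_of_nonneg hT0] at h1
      rwa [hγ₂.1] at h1
    have duu : dist (f (γ₁ T)) (f (γ₂ T)) ≤ l1 * δ + μ1 := by
      have h1 := hLSL (γ₁ T) (γ₂ T)
      have h2 : l1 * dist (γ₁ T) (γ₂ T) ≤ l1 * δ := mul_le_mul_of_nonneg_left hfelX hl1.le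
      linarith
    have g3 : l2 * T - (μ2 + (l1*δ + μ1)/2) ≤ gp (f a) (f (γ₁ T)) (f (γ₂ T)) := by
      have hdef : gp (f a) (f (γ₁ T)) (f (γ₂ T)) =
          (dist (f (γ₁ T)) (f a) + dist (f (γ₂ T)) (f a) - dist (f (γ₁ T)) (f (γ₂ T)))/2 := rfl
      rw [hdef]
      linarith
    have c2 := hY (f (γ₁ T)) (f x₂) (f (γ₂ T)) (f a)
    have c1 := hY (f x₁) (f x₂) (f (γ₁ T)) (f a)
    have hg1' : gp (f a) (f x₁) (f (γ₁ T)) = gp (f a) (f (γ₁ T)) (f x₁) := gp_comm _ _ _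
    have hmin2 : l2 * T - ((μ2 + δ + D0) + μ2 + (l1*δ + μ1)/2) ≤
        min (gp (f a) (f (γ₁ T)) (f (γ₂ T))) (gp (f a) (f (γ₂ T)) (f x₂)) := by
      apply le_min
      · have : (0:ℝ) ≤ μ2 + δ + D0 := by positivity
        linarith
      · have : (0:ℝ) ≤ μ2 + (l1*δ + μ1)/2 := by positivity
        linarith
    have hc2' : l2 * T - ((μ2 + δ + D0) + μ2 + (l1*δ + μ1)/2) - δ/4 ≤
        gp (f a) (f (γ₁ T)) (f x₂) := by linarith
    have hmin1 : l2 * T - ((μ2 + δ + D0) + μ2 + (l1*δ + μ1)/2) - δ/4 ≤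
        min (gp (f a) (f x₁) (f (γ₁ T))) (gp (f a) (f (γ₁ T)) (f x₂)) := by
      apply le_min
      · rw [hg1']
        have : (0:ℝ) ≤ μ2 + (l1*δ + μ1)/2 + δ/4 := by positivity
        linarith
      · exact hc2'
    rw [hCKdef, ← hTdef]
    linarith
  · intro x' τ hτ hτe r hr
    obtain ⟨γ, hγ, hγe⟩ := hgX a x'
    have hτ' : IsGeodesicOn τ (f (γ 0)) (dist (f (γ 0)) (f x')) := by rw [hγ.1]; exact hτ
    have hτ'e : τ (dist (f (γ 0)) (f x')) = f x' := by rw [hγ.1]; exact hτe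
    have hr' : r ∈ Icc (0:ℝ) (dist (f (γ 0)) (f x')) := by rw [hγ.1]; exact hr
    obtain ⟨u, _, _, hd⟩ := hchain x' γ hγ hγe 0 le_rfl dist_nonneg τ hτ' hτ'e r hr'
    exact ⟨γ u, hd⟩

end Master
/-- if `f` is radial, the induced boundary map is surjective and
`Y` is visual, then `f` is coarsely surjective. -/
theorem stmt13 {X : Type*} [MetricSpace X] [ProperSpace X]
    {Y : Type*} [MetricSpace Y] [ProperSpace Y]
    (δ : ℝ) (hX : IsDeltaHyperbolic X δ) (hY : IsDeltaHyperbolic Y δ)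
    (hgX : IsGeodesicSpace X) (hgY : IsGeodesicSpace Y)
    (f : X → Y) (a : X) (hrad : Radial f a)
    (D : ℝ) (hD : 0 < D) (hvisY : IsVisualSpace (f a) D)
    (g : Boundary a → Boundary (f a)) (hg : InducedBoundaryMap a f g)
    (hsurj : Function.Surjective g) :
    CoarselySurjective f := by
  obtain ⟨⟨l1, μ1, hl1, hμ1, hLSL⟩, l2, μ2, hl2, hμ2, hradial⟩ := hrad
  have hδ : 0 ≤ δ := hyp_nonneg hX a
  obtain ⟨CK, D0, hD0pos, hkey, hray⟩ :=
    radial_estimates hX hY hδ hgX hgY f a hl1 hμ1 hl2 hμ2 hLSL hradial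
  refine ⟨2*D + 2*δ + D0 + 1, by positivity, ?_⟩
  intro y
  obtain ⟨R, hRdef⟩ : ∃ R : ℝ, R = dist y (f a) := ⟨_, rfl⟩
  have hR0 : 0 ≤ R := hRdef ▸ dist_nonneg
  obtain ⟨η, hηray, hηgp⟩ := hvisY y
  -- basic facts about the ray η
  have hη0 : η 0 = f a := hηray.1
  have hηd : ∀ s : ℝ, 0 ≤ s → dist (η s) (f a) = s := by
    intro s hs
    rw [← hη0, hηray.2 s (Set.mem_Ici.mpr hs) 0 (Set.mem_Ici.mpr le_rfl), sub_zero, abs_of_nonneg hs]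
  have hηgp2 : ∀ s t : ℝ, 0 ≤ s → 0 ≤ t → gp (f a) (η s) (η t) = min s t := by
    intro s t hs ht
    have hdef : gp (f a) (η s) (η t) =
        (dist (η s) (f a) + dist (η t) (f a) - dist (η s) (η t))/2 := rfl
    rw [hdef, hηd s hs, hηd t ht, hηray.2 s (Set.mem_Ici.mpr hs) t (Set.mem_Ici.mpr ht)]
    rcases le_total s t with h | h
    · rw [abs_of_nonpos (by linarith), min_eq_left h]; ring
    · rw [abs_of_nonneg (by linarith), min_eq_right h]; ring
  have hηconv : ConvSeq (f a) (fun n : ℕ => η n) := by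
    rw [convSeq_iff]
    intro C
    refine ⟨⌈C⌉₊, fun i j hi hj => ?_⟩
    rw [hηgp2 _ _ (Nat.cast_nonneg i) (Nat.cast_nonneg j)]
    have h1 : C ≤ (⌈C⌉₊:ℝ) := Nat.le_ceil C
    have h2 : ((⌈C⌉₊:ℕ):ℝ) ≤ (i:ℝ) := Nat.cast_le.2 hi
    have h3 : ((⌈C⌉₊:ℕ):ℝ) ≤ (j:ℝ) := Nat.cast_le.2 hj
    exact le_min (by linarith) (by linarith)
  -- the boundary point of η and a preimage
  obtain ⟨p, hgp⟩ := hsurj (bpt (f a) (fun n : ℕ => η n) hηconv)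
  obtain ⟨s0, hs0⟩ := Quot.exists_rep p
  obtain ⟨x, hx⟩ := s0
  -- the image sequence converges
  have hfx : ConvSeq (f a) (f ∘ x) := by
    rw [convSeq_iff]
    intro C
    obtain ⟨N, hN⟩ := convSeq_iff.1 hx ((C + CK)/l2)
    refine ⟨N, fun i j hi hj => ?_⟩
    have h1 := hkey (x i) (x j)
    have h2 := hN i j hi hj
    have h3 : (C + CK)/l2 * l2 ≤ gp a (x i) (x j) * l2 :=
      mul_le_mul_of_nonneg_right h2 hl2.le
    rw [div_mul_cancel₀ _ (ne_of_gt hl2)] at h3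
    show C ≤ gp (f a) (f (x i)) (f (x j))
    have e : gp a (x i) (x j) * l2 = l2 * gp a (x i) (x j) := by ring
    linarith
  have hbp : bpt a x hx = p := hs0
  have hgq : bpt (f a) (f ∘ x) hfx = bpt (f a) (fun n : ℕ => η n) hηconv := by
    rw [← hg x hx hfx, hbp, hgp]
  have hSE : SeqEquiv (f a) (f ∘ x) (fun n : ℕ => η n) :=
    bpt_eq_seqEquiv hY hfx hηconv hgq
  -- visuality: y is close to η R
  have hbdd : IsBoundedUnder (· ≥ ·) atTop (fun n : ℕ => gp (f a) y (η n)) := by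
    refine ⟨0, ?_⟩
    rw [Filter.eventually_map]
    exact Filter.Eventually.of_forall (fun n => gp_nonneg _ _ _)
  have hEv : ∀ᶠ n : ℕ in atTop, dist y (f a) - D < gp (f a) y (η n) :=
    Filter.eventually_lt_of_lt_liminf hηgp hbdd
  obtain ⟨N', hN'⟩ := eventually_atTop.1 hEv
  -- pick indices
  obtain ⟨N₂, hN₂⟩ := seqEquiv_iff.1 hSE R
  obtain ⟨n, hn⟩ : ∃ n : ℕ, N₂ ≤ n ∧ N' ≤ n ∧ R ≤ (n:ℝ) :=
    ⟨max N₂ (max N' ⌈R⌉₊), le_max_left _ _,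
      le_trans (le_max_left _ _) (le_max_right _ _),
      le_trans (Nat.le_ceil R) (Nat.cast_le.2 (le_trans (le_max_right _ _) (le_max_right _ _)))⟩
  have hyη : gp (f a) y (η (n:ℝ)) > R - D := by
    have := hN' n hn.2.1
    rw [← hRdef] at this
    exact this
  -- step 1 : dist y (η R) ≤ 2D + δ/2
  have hstep1 : dist y (η R) ≤ 2*D + δ/2 := by
    have hchain := hY y (η R) (η (n:ℝ)) (f a)
    have he : gp (f a) (η (n:ℝ)) (η R) = R := by
      rw [hηgp2 _ _ (Nat.cast_nonneg n) hR0, min_eq_right hn.2.2]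
    rw [he] at hchain
    have hmin : R - D ≤ min (gp (f a) y (η (n:ℝ))) R :=
      le_min (by linarith) (by linarith)
    have hgpl : R - D - δ/4 ≤ gp (f a) y (η R) := by linarith
    have hdef : gp (f a) y (η R) = (dist y (f a) + dist (η R) (f a) - dist y (η R))/2 := rfl
    rw [hdef, ← hRdef, hηd R hR0] at hgpl
    linarith
  -- step 2 : take i := N₂ and the geodesic from f a to f (x N₂)
  obtain ⟨τ, hτ, hτe⟩ := hgY (f a) (f (x N₂))
  have hgpRn : R ≤ gp (f a) (f (x N₂)) (η (n:ℝ)) := by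
    have := hN₂ N₂ n le_rfl hn.1
    exact this
  have hRL : R ≤ dist (f a) (f (x N₂)) := by
    have h1 : gp (f a) (f (x N₂)) (η (n:ℝ)) ≤ dist (f (x N₂)) (f a) := gp_le_left _ _ _
    rw [dist_comm] at h1
    linarith
  -- η restricted is a geodesic from f a to η n
  have hηdist : dist (f a) (η (n:ℝ)) = (n:ℝ) := by rw [dist_comm]; exact hηd _ (Nat.cast_nonneg n)
  have hηgeo : IsGeodesicOn η (f a) (dist (f a) (η (n:ℝ))) := by
    rw [hηdist]
    exact ⟨hη0, fun s hs t ht => hηray.2 s (Set.mem_Ici.mpr hs.1) t (Set.mem_Ici.mpr ht.1)⟩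
  have hηend : η (dist (f a) (η (n:ℝ))) = η (n:ℝ) := by rw [hηdist]
  have hfel : dist (η R) (τ R) ≤ δ := by
    have hgpc : R ≤ gp (f a) (η (n:ℝ)) (f (x N₂)) := by
      rw [gp_comm]; exact hgpRn
    exact fellow hY hδ hηgeo hηend hτ hτe hR0 hgpc
  -- step 3 : τ R is close to the image of f
  obtain ⟨x₀, hx₀⟩ := hray (x N₂) τ hτ hτe R ⟨hR0, hRL⟩
  refine ⟨x₀, ?_⟩
  have ht1 : dist y (f x₀) ≤ dist y (η R) + dist (η R) (τ R) + dist (τ R) (f x₀) :=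
    dist_triangle4 _ _ _ _
  linarith
end Gromov
end
end
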